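/- arXiv:1705.00427 — 7 statements merged into one kernel-verified Lean document; each statement's English description precedes it below -/
import Mathlib

section
/- For real numbers 0 ≤ a < b, the function φ(x) = (1 - x^a)/(1 - x^b) is nonincreasing on (0,1); moreover, if a > 0 then φ is strictly decreasing on (0,1). -/
open Set

lemma key_lemma (a b : ℝ) (ha : 0 < a) (hab : a < b) {x y : ℝ}
    (hx : x ∈ Ioo (0:ℝ) 1) (hy : y ∈ Ioo (0:ℝ) 1) (hxy : x < y) :
    (1 - y ^ a) / (1 - y ^ b) < (1 - x ^ a) / (1 - x ^ b) := by
  obtain ⟨hx0, hx1⟩ := hx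
  obtain ⟨hy0, hy1⟩ := hy
  have hb : 0 < b := ha.trans hab
  set c := a / b with hc
  have hc0 : 0 < c := div_pos ha hb
  have hc1 : c < 1 := (div_lt_one hb).mpr hab
  have hconc := Real.strictConcaveOn_rpow hc0 hc1
  set s := x ^ b with hs
  set t := y ^ b with ht
  have hs1 : s < 1 := Real.rpow_lt_one hx0.le hx1 hb
  have ht1 : t < 1 := Real.rpow_lt_one hy0.le hy1 hb
  have hst : s < t := Real.rpow_lt_rpow hx0.le hxy hb
  have hs0 : 0 < s := Real.rpow_pos_of_pos hx0 b
  have ht0 : 0 < t := Real.rpow_pos_of_pos hy0 b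
  have hsc : s ^ c = x ^ a := by
    rw [hs, ← Real.rpow_mul hx0.le]
    congr 1
    rw [hc]; field_simp
  have htc : t ^ c = y ^ a := by
    rw [ht, ← Real.rpow_mul hy0.le]
    congr 1
    rw [hc]; field_simp
  have key := hconc.secant_strict_mono (a := 1) (x := s) (y := t)
    (mem_Ici.mpr zero_le_one) hs0.le ht0.le hs1.ne ht1.ne hst
  rw [Real.one_rpow] at key
  have h1 : (t ^ c - 1) / (t - 1) = (1 - t ^ c) / (1 - t) := by
    rw [← neg_div_neg_eq]; ring_nf
  have h2 : (s ^ c - 1) / (s - 1) = (1 - s ^ c) / (1 - s) := by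
    rw [← neg_div_neg_eq]; ring_nf
  rw [h1, h2, hsc, htc] at key
  exact key

theorem stmt_1 (a b : ℝ) (ha : 0 ≤ a) (hab : a < b) :
    AntitoneOn (fun x : ℝ => (1 - x ^ a) / (1 - x ^ b)) (Ioo 0 1) ∧
    (0 < a → StrictAntiOn (fun x : ℝ => (1 - x ^ a) / (1 - x ^ b)) (Ioo 0 1)) := by
  rcases eq_or_lt_of_le ha with rfl | ha'
  · constructor
    · intro x hx y hy _
      simp [Real.rpow_zero]
    · intro h; exact absurd h (lt_irrefl 0)
  · have hsa : StrictAntiOn (fun x : ℝ => (1 - x ^ a) / (1 - x ^ b)) (Ioo 0 1) :=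
      fun x hx y hy hxy => key_lemma a b ha' hab hx hy hxy
    exact ⟨hsa.antitoneOn, fun _ => hsa⟩
end

section
/- For real numbers 0 < a < b, the function ψ(x) = (1 - x^a)(1 + x^b)/(1 - x^{a+b}) is strictly decreasing on (0,1). -/
open Set

lemma aux_sinh_lt (x : ℝ) (hx : 0 < x) : Real.sinh x < x * Real.cosh x := by
  have h : StrictMonoOn (fun y => y * Real.cosh y - Real.sinh y) (Set.Ici 0) := by
    apply strictMonoOn_of_deriv_pos (convex_Ici 0)
    · fun_prop
    · intro y hy
      rw [interior_Ici] at hy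
      have hy' : (0:ℝ) < y := hy
      have hd := ((hasDerivAt_id y).mul (Real.hasDerivAt_cosh y)).sub (Real.hasDerivAt_sinh y)
      simp only [id_eq, one_mul] at hd
      rw [show deriv (fun y => y * Real.cosh y - Real.sinh y) y = _ from hd.deriv]
      have := Real.sinh_pos_iff.2 hy'
      nlinarith
  have := h Set.self_mem_Ici (le_of_lt hx) hx
  simp at this
  linarith

lemma aux_sinh_div (s u : ℝ) (hs : 0 < s) (hsu : s < u) :
    Real.sinh s / s < Real.sinh u / u := by
  have h : StrictMonoOn (fun y => Real.sinh y / y) (Set.Ioi 0) := by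
    apply strictMonoOn_of_deriv_pos (convex_Ioi 0)
    · apply ContinuousOn.div Real.continuous_sinh.continuousOn continuousOn_id
      intro y hy; exact ne_of_gt hy
    · intro y hy
      rw [interior_Ioi] at hy
      have hy' : (0:ℝ) < y := hy
      have hd : HasDerivAt (fun y => Real.sinh y / y)
          ((Real.cosh y * y - Real.sinh y * 1) / y ^ 2) y :=
        (Real.hasDerivAt_sinh y).div (hasDerivAt_id y) (ne_of_gt hy')
      rw [hd.deriv]
      apply div_pos _ (by positivity)
      have := aux_sinh_lt y hy'
      nlinarith
  exact h hs (lt_trans hs hsu) hsu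

lemma aux_key (a b t : ℝ) (ha : 0 < a) (hab : a < b) (ht : 0 < t) :
    b * Real.sinh (a * t) < a * Real.sinh (b * t) := by
  have hb : (0:ℝ) < b := ha.trans hab
  have h := aux_sinh_div (a * t) (b * t) (mul_pos ha ht) (by nlinarith)
  rw [div_lt_div_iff₀ (mul_pos ha ht) (mul_pos hb ht)] at h
  nlinarith

lemma aux_B (a b x : ℝ) (ha : 0 < a) (hab : a < b) (hx : 0 < x) (hx1 : x < 1) :
    b * (x ^ b * (1 - x ^ (2*a))) < a * (x ^ a * (1 - x ^ (2*b))) := by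
  set t := -Real.log x with ht_def
  have ht : 0 < t := by have := Real.log_neg hx hx1; simp [ht_def]; linarith
  have hxc : ∀ c : ℝ, x ^ c = Real.exp (-(c*t)) := by
    intro c; rw [Real.rpow_def_of_pos hx, ht_def]; ring_nf
  have key := aux_key a b t ha hab ht
  have e1 : x ^ b * (1 - x ^ (2*a)) = 2 * Real.sinh (a*t) * Real.exp (-((a+b)*t)) := by
    rw [hxc, hxc, Real.sinh_eq]
    rw [mul_sub, mul_one, ← Real.exp_add]
    field_simp
    rw [sub_mul, ← Real.exp_add, ← Real.exp_add]
    ring_nf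
  have e2 : x ^ a * (1 - x ^ (2*b)) = 2 * Real.sinh (b*t) * Real.exp (-((a+b)*t)) := by
    rw [hxc, hxc, Real.sinh_eq]
    rw [mul_sub, mul_one, ← Real.exp_add]
    field_simp
    rw [sub_mul, ← Real.exp_add, ← Real.exp_add]
    ring_nf
  rw [e1, e2]
  have hE := Real.exp_pos (-((a+b)*t))
  nlinarith

lemma aux_g_mono (a b : ℝ) (ha : 0 < a) (hab : a < b) :
    StrictMonoOn (fun x : ℝ => (x ^ a - x ^ b) / (1 - x ^ (a+b))) (Ioo 0 1) := by
  have hb : (0:ℝ) < b := ha.trans hab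
  have hden : ∀ x ∈ Ioo (0:ℝ) 1, (0:ℝ) < 1 - x ^ (a+b) := by
    intro x hx
    have : x ^ (a+b) < 1 := Real.rpow_lt_one (le_of_lt hx.1) hx.2 (by linarith)
    linarith
  apply strictMonoOn_of_deriv_pos (convex_Ioo 0 1)
  · intro x hx
    have hx0 : x ≠ 0 := ne_of_gt hx.1
    apply ContinuousAt.continuousWithinAt
    apply ContinuousAt.div
    · exact (Real.continuousAt_rpow_const x a (Or.inl hx0)).sub
        (Real.continuousAt_rpow_const x b (Or.inl hx0))
    · exact continuousAt_const.sub (Real.continuousAt_rpow_const x (a+b) (Or.inl hx0))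
    · exact ne_of_gt (hden x hx)
  · intro x hx
    rw [interior_Ioo] at hx
    have hx0 : 0 < x := hx.1
    have hd : HasDerivAt (fun x : ℝ => (x ^ a - x ^ b) / (1 - x ^ (a+b)))
        (((a * x ^ (a-1) - b * x ^ (b-1)) * (1 - x ^ (a+b)) -
          (x ^ a - x ^ b) * (0 - (a+b) * x ^ (a+b-1))) / (1 - x ^ (a+b)) ^ 2) x := by
      exact HasDerivAt.div
        ((Real.hasDerivAt_rpow_const (Or.inl hx0.ne')).sub
          (Real.hasDerivAt_rpow_const (Or.inl hx0.ne')))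
        ((hasDerivAt_const x (1:ℝ)).sub (Real.hasDerivAt_rpow_const (Or.inl hx0.ne')))
        (ne_of_gt (hden x hx))
    rw [hd.deriv]
    apply div_pos _ (pow_pos (hden x hx) 2)
    have hsub : ∀ c : ℝ, x ^ (c - 1) = x ^ c / x := by
      intro c; rw [Real.rpow_sub hx0, Real.rpow_one]
    have hadd : x ^ (a+b) = x ^ a * x ^ b := Real.rpow_add hx0 a b
    have hB := aux_B a b x ha hab hx0 hx.2
    have h2a : x ^ (2*a) = x ^ a * x ^ a := by rw [two_mul, Real.rpow_add hx0]
    have h2b : x ^ (2*b) = x ^ b * x ^ b := by rw [two_mul, Real.rpow_add hx0]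
    rw [h2a, h2b] at hB
    rw [hsub, hsub, hsub, hadd]
    have heq : (a * (x ^ a / x) - b * (x ^ b / x)) * (1 - x ^ a * x ^ b) -
        (x ^ a - x ^ b) * (0 - (a+b) * (x ^ a * x ^ b / x)) =
        (a * (x ^ a * (1 - x ^ b * x ^ b)) - b * (x ^ b * (1 - x ^ a * x ^ a))) / x := by
      field_simp
      ring
    rw [heq]
    apply div_pos _ hx0
    linarith

theorem stmt_3 (a b : ℝ) (ha : 0 < a) (hab : a < b) :
    StrictAntiOn (fun x : ℝ => (1 - x ^ a) * (1 + x ^ b) / (1 - x ^ (a + b))) (Ioo 0 1) := by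
  have hpsi : ∀ z ∈ Ioo (0:ℝ) 1,
      (1 - z ^ a) * (1 + z ^ b) / (1 - z ^ (a + b)) =
      1 - (z ^ a - z ^ b) / (1 - z ^ (a + b)) := by
    intro z hz
    have hden : (0:ℝ) < 1 - z ^ (a+b) := by
      have : z ^ (a+b) < 1 := Real.rpow_lt_one (le_of_lt hz.1) hz.2 (by linarith)
      linarith
    have hadd : z ^ (a+b) = z ^ a * z ^ b := Real.rpow_add hz.1 a b
    rw [hadd] at hden ⊢
    field_simp
    ring
  intro x hx y hy hxy
  simp only
  rw [hpsi x hx, hpsi y hy]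
  have := aux_g_mono a b ha hab hx hy hxy
  linarith
end

section
/- Let p > 1, q > 1, r > 1, m ∈ (0,1), x ∈ (0,1), with q ≤ (2r-1)p. Set R := (1-m^q)/(1+m^{r-1}) and D := (1 - (1-m^{r-1})x^{r-1})^{1/(r-1)}. Then 1 - R - R·(mx)^{r-1} - (mx)^q > D^{(2r-1)p}·(1 - R + R·(mx)^{r-1}/D^{r-1} - (mx)^q/D^q). -/
open Real Set

lemma aux_log (c : ℝ) (hc0 : 0 < c) (hc1 : c < 1) :
    1 - c * c < (1 + c * c) * (-Real.log c) := by
  set G : ℝ → ℝ := fun v => (1 + v * v) * (-Real.log v) - (1 - v * v) with hG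
  have key : ∀ v ∈ Icc c 1, HasDerivAt G
      ((1*v+v*1) * (-Real.log v) + (1 + v*v) * (-(1/v)) - (-(1*v+v*1))) v := by
    intro v hv
    have hv0 : 0 < v := lt_of_lt_of_le hc0 hv.1
    have h1 : HasDerivAt (fun v : ℝ => 1 + v * v) (1*v+v*1) v :=
      ((hasDerivAt_id v).mul (hasDerivAt_id v)).const_add 1
    have h2 : HasDerivAt (fun v : ℝ => -Real.log v) (-(1/v)) v := by
      have := (Real.hasDerivAt_log hv0.ne').neg; rw [one_div]; exact this
    have h3 : HasDerivAt (fun v : ℝ => 1 - v * v) (-(1*v+v*1)) v :=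
      ((hasDerivAt_id v).mul (hasDerivAt_id v)).const_sub 1
    exact (h1.mul h2).sub h3
  have hanti : StrictAntiOn G (Icc c 1) := by
    apply strictAntiOn_of_deriv_neg (convex_Icc c 1)
    · exact fun v hv => (key v hv).continuousAt.continuousWithinAt
    · intro v hv
      rw [interior_Icc] at hv
      have hv0 : 0 < v := lt_trans hc0 hv.1
      have hv1 : v < 1 := hv.2
      rw [(key v (Ioo_subset_Icc_self hv)).deriv]
      have hne : v * v ≠ 1 := by nlinarith
      have hlog : Real.log (1/(v*v)) < 1/(v*v) - 1 :=
        Real.log_lt_sub_one_of_pos (by positivity) (by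
          intro h; apply hne; field_simp at h; linarith)
      rw [Real.log_div one_ne_zero (by positivity), Real.log_one,
        Real.log_mul hv0.ne' hv0.ne'] at hlog
      have h2 : -2 * (v*v) * Real.log v < 1 - v*v := by
        have := mul_lt_mul_of_pos_left hlog (show (0:ℝ) < v*v by positivity)
        have hv2 : v*v*(1/(v*v) - 1) = 1 - v*v := by field_simp
        nlinarith
      have hrw : (1*v+v*1) * (-Real.log v) + (1 + v*v) * (-(1/v)) - (-(1*v+v*1))
          = (-2*(v*v)*Real.log v - (1 - v*v)) / v := by
        field_simp
        ring
      rw [hrw]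
      exact div_neg_of_neg_of_pos (by linarith) hv0
  have h1mem : (1:ℝ) ∈ Icc c 1 := ⟨hc1.le, le_refl 1⟩
  have hcmem : c ∈ Icc c 1 := ⟨le_refl c, hc1.le⟩
  have := hanti hcmem h1mem hc1
  have hG1 : G 1 = 0 := by simp [hG]
  have hGc : G c = (1 + c * c) * (-Real.log c) - (1 - c * c) := rfl
  rw [hG1] at this
  linarith [this]

lemma aux_sinh (c τ : ℝ) (hc0 : 0 < c) (hc1 : c < 1) (hτ : 1 < τ) :
    τ * (1 - c * c) < c ^ (1 - τ) - c ^ (1 + τ) := by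
  set L := Real.log c with hL
  have hLneg : L < 0 := Real.log_neg hc0 hc1
  set g : ℝ → ℝ := fun σ => Real.exp ((1-σ)*L) - Real.exp ((1+σ)*L) - σ*(1-c*c) with hg
  have key : ∀ σ : ℝ, HasDerivAt g
      (Real.exp ((1-σ)*L) * (-1*L) - Real.exp ((1+σ)*L) * (1*L) - 1*(1-c*c)) σ := by
    intro σ
    have h1 : HasDerivAt (fun σ : ℝ => (1-σ)*L) (-1*L) σ :=
      ((hasDerivAt_id σ).const_sub 1).mul_const L
    have h2 : HasDerivAt (fun σ : ℝ => (1+σ)*L) (1*L) σ :=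
      ((hasDerivAt_id σ).const_add 1).mul_const L
    have h3 : HasDerivAt (fun σ : ℝ => σ*(1-c*c)) (1*(1-c*c)) σ :=
      (hasDerivAt_id σ).mul_const (1-c*c)
    exact ((h1.exp).sub (h2.exp)).sub h3
  have hmono : StrictMonoOn g (Icc 1 τ) := by
    apply strictMonoOn_of_deriv_pos (convex_Icc 1 τ)
    · exact fun σ hσ => (key σ).continuousAt.continuousWithinAt
    · intro σ hσ
      rw [interior_Icc] at hσ
      rw [(key σ).deriv]
      set X := Real.exp ((1-σ)*L) with hX
      set Y := Real.exp ((1+σ)*L) with hY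
      have hX1 : 1 < X := by
        have h0 : 0 < (1-σ)*L := mul_pos_of_neg_of_neg (by linarith [hσ.1]) hLneg
        have h1 := Real.exp_lt_exp.mpr h0
        rw [Real.exp_zero] at h1
        exact h1
      have hY1 : Y < 1 := by
        have h0 : (1+σ)*L < 0 := mul_neg_of_pos_of_neg (by linarith [hσ.1]) hLneg
        have h1 := Real.exp_lt_exp.mpr h0
        rw [Real.exp_zero] at h1
        exact h1
      have hXY : X * Y = c * c := by
        rw [hX, hY, ← Real.exp_add]
        have : (1-σ)*L + (1+σ)*L = L + L := by ring
        rw [this, Real.exp_add, hL, Real.exp_log hc0]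
      have hsum : 1 + c*c ≤ X + Y := by nlinarith [mul_nonneg (le_of_lt (sub_pos.mpr hX1)) (le_of_lt (sub_pos.mpr hY1))]
      have hkey := aux_log c hc0 hc1
      have hXpos : 0 < X := Real.exp_pos _
      have hYpos : 0 < Y := Real.exp_pos _
      nlinarith [mul_le_mul_of_nonneg_left hsum (le_of_lt (neg_pos.mpr hLneg))]
    
  have h1mem : (1:ℝ) ∈ Icc 1 τ := ⟨le_refl 1, hτ.le⟩
  have hτmem : τ ∈ Icc 1 τ := ⟨hτ.le, le_refl τ⟩
  have hlt := hmono h1mem hτmem hτ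
  have hg1 : g 1 = 0 := by
    rw [hg]; simp only
    have e1 : (1-(1:ℝ))*L = 0 := by ring
    have e2 : (1+(1:ℝ))*L = L + L := by ring
    rw [e1, e2, Real.exp_zero, Real.exp_add, hL, Real.exp_log hc0]; ring
  rw [hg1] at hlt
  have hrw1 : c ^ (1-τ) = Real.exp ((1-τ)*L) := by
    rw [Real.rpow_def_of_pos hc0, hL, mul_comm]
  have hrw2 : c ^ (1+τ) = Real.exp ((1+τ)*L) := by
    rw [Real.rpow_def_of_pos hc0, hL, mul_comm]
  rw [hrw1, hrw2]
  have : g τ = Real.exp ((1-τ)*L) - Real.exp ((1+τ)*L) - τ*(1-c*c) := rfl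
  linarith [hlt]

lemma aux_phi (β a u : ℝ) (hβ0 : 0 < β) (hβ2 : β < 2) (ha0 : 0 < a) (hau : a < u)
    (hu1 : u < 1) :
    (1 + a) * (1 - a) ^ (β - 1) * (1 - u ^ β) < (1 + u) * (1 - u) ^ (β - 1) * (1 - a ^ β) := by
  set f : ℝ → ℝ := fun v => Real.log (1+v) + (β-1) * Real.log (1-v) - Real.log (1 - v ^ β)
    with hf
  have key : ∀ v, 0 < v → v < 1 → HasDerivAt f
      (1/(1+v) + (β-1) * (-1/(1-v)) - (-(β * v ^ (β-1)))/(1 - v ^ β)) v := by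
    intro v hv0 hv1
    have hvb : v ^ β < 1 := Real.rpow_lt_one hv0.le hv1 hβ0
    have l1 : HasDerivAt (fun v : ℝ => Real.log (1+v)) (1/(1+v)) v := by
      have := (((hasDerivAt_id v).const_add 1).log
        (by intro h; simp only [id_eq] at h; nlinarith) : HasDerivAt _ _ v)
      simpa using this
    have l2 : HasDerivAt (fun v : ℝ => (β-1) * Real.log (1-v)) ((β-1) * (-1/(1-v))) v := by
      have h := (((hasDerivAt_id v).const_sub 1).log
        (by intro h; simp only [id_eq] at h; nlinarith) : HasDerivAt _ _ v)
      have := h.const_mul (β-1)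
      simpa using this
    have l3 : HasDerivAt (fun v : ℝ => Real.log (1 - v ^ β))
        ((-(β * v ^ (β-1)))/(1 - v ^ β)) v := by
      have hrp : HasDerivAt (fun x : ℝ => x ^ β) (β * v ^ (β-1)) v :=
        Real.hasDerivAt_rpow_const (Or.inl hv0.ne')
      exact (hrp.const_sub 1).log (by intro h; nlinarith)
    exact (l1.add l2).sub l3
  have hmono : StrictMonoOn f (Icc a u) := by
    apply strictMonoOn_of_deriv_pos (convex_Icc a u)
    · intro v hv
      have hv0 : 0 < v := lt_of_lt_of_le ha0 hv.1
      have hv1 : v < 1 := lt_of_le_of_lt hv.2 hu1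
      exact (key v hv0 hv1).continuousAt.continuousWithinAt
    · intro v hv
      rw [interior_Icc] at hv
      have hv0 : 0 < v := lt_trans ha0 hv.1
      have hv1 : v < 1 := lt_trans hv.2 hu1
      rw [(key v hv0 hv1).deriv]
      have hvb : v ^ β < 1 := Real.rpow_lt_one hv0.le hv1 hβ0
      have hvb1 : v ≤ v ^ (β-1) := by
        have := Real.rpow_le_rpow_of_exponent_ge hv0 hv1.le (show β - 1 ≤ 1 by linarith)
        rwa [Real.rpow_one] at this
      have hvv : v ^ β = v ^ (β-1) * v := by
        rw [← Real.rpow_add_one hv0.ne' (β-1)]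
        norm_num
      set w := v ^ (β-1) with hw
      rw [hvv]
      have hwv : w * v < 1 := by rw [← hvv]; exact hvb
      have hne1 : (1:ℝ) + v ≠ 0 := by nlinarith
      have hne2 : (1:ℝ) - v ≠ 0 := by nlinarith
      have hne3 : (1:ℝ) - w * v ≠ 0 := by nlinarith
      have hrw : 1/(1+v) + (β-1) * (-1/(1-v)) - (-(β * w))/(1 - w * v)
          = ((2-β)*(1 - w * v) + β*(w - v)) / ((1+v) * ((1-v) * (1 - w * v))) := by
        rw [← mul_div_assoc, div_add_div _ _ hne1 hne2, div_sub_div _ _ (mul_ne_zero hne1 hne2) hne3, div_eq_div_iff (mul_ne_zero (mul_ne_zero hne1 hne2) hne3) (mul_ne_zero hne1 (mul_ne_zero hne2 hne3))]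
        ring
      rw [hrw]
      apply div_pos
      · have h1 : 0 < (2-β)*(1 - w*v) := by nlinarith
        nlinarith
      · have hwpos : 0 < w := Real.rpow_pos_of_pos hv0 _
        apply mul_pos (by linarith) (mul_pos (by linarith) (by linarith))
  have hflt : f a < f u := hmono ⟨le_refl a, hau.le⟩ ⟨hau.le, le_refl u⟩ hau
  have hexpf : ∀ v, 0 < v → v < 1 →
      Real.exp (f v) = (1+v) * (1-v) ^ (β-1) / (1 - v ^ β) := by
    intro v hv0 hv1
    have hvb : v ^ β < 1 := Real.rpow_lt_one hv0.le hv1 hβ0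
    have hpow : (1-v) ^ (β-1) = Real.exp ((β-1) * Real.log (1-v)) := by
      rw [Real.rpow_def_of_pos (by linarith : (0:ℝ) < 1 - v), mul_comm]
    rw [hf]
    simp only
    rw [hpow, Real.exp_sub, Real.exp_add, Real.exp_log (by linarith : (0:ℝ) < 1 + v),
      Real.exp_log (by linarith : (0:ℝ) < 1 - v ^ β)]
  have hlt := Real.exp_lt_exp.mpr hflt
  rw [hexpf a ha0 (lt_trans hau hu1), hexpf u (lt_trans ha0 hau) hu1] at hlt
  have hab : a ^ β < 1 := Real.rpow_lt_one ha0.le (lt_trans hau hu1) hβ0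
  have hub : u ^ β < 1 := Real.rpow_lt_one (lt_trans ha0 hau).le hu1 hβ0
  have := (div_lt_div_iff₀ (by linarith) (by linarith)).mp hlt
  linear_combination this

lemma aux_g (t a u : ℝ) (ht : 2 < t) (ha0 : 0 < a) (hau : a < u) (hu1 : u < 1) :
    (1 - a ^ t) * (1 - u) * (1 + u ^ (t-1)) < (1 - u ^ t) * (1 - a) * (1 + a ^ (t-1)) := by
  set f : ℝ → ℝ := fun v =>
    Real.log (1 - v ^ t) - Real.log (1-v) - Real.log (1 + v ^ (t-1)) with hf
  have key : ∀ v, 0 < v → v < 1 → HasDerivAt f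
      ((-(t * v ^ (t-1)))/(1 - v ^ t) - (-1/(1-v)) - ((t-1) * v ^ (t-1-1))/(1 + v ^ (t-1))) v := by
    intro v hv0 hv1
    have hvt : v ^ t < 1 := Real.rpow_lt_one hv0.le hv1 (by linarith)
    have hvt1 : (0:ℝ) < v ^ (t-1) := Real.rpow_pos_of_pos hv0 _
    have l1 : HasDerivAt (fun v : ℝ => Real.log (1 - v ^ t))
        ((-(t * v ^ (t-1)))/(1 - v ^ t)) v := by
      have hrp : HasDerivAt (fun x : ℝ => x ^ t) (t * v ^ (t-1)) v :=
        Real.hasDerivAt_rpow_const (Or.inl hv0.ne')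
      exact (hrp.const_sub 1).log (by intro h; nlinarith)
    have l2 : HasDerivAt (fun v : ℝ => Real.log (1-v)) (-1/(1-v)) v := by
      have h := (((hasDerivAt_id v).const_sub 1).log
        (by intro h; simp only [id_eq] at h; nlinarith) : HasDerivAt _ _ v)
      simpa using h
    have l3 : HasDerivAt (fun v : ℝ => Real.log (1 + v ^ (t-1)))
        (((t-1) * v ^ (t-1-1))/(1 + v ^ (t-1))) v := by
      have hrp : HasDerivAt (fun x : ℝ => x ^ (t-1)) ((t-1) * v ^ (t-1-1)) v :=
        Real.hasDerivAt_rpow_const (Or.inl hv0.ne')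
      exact (hrp.const_add 1).log (by intro h; nlinarith)
    exact (l1.sub l2).sub l3
  have hmono : StrictMonoOn f (Icc a u) := by
    apply strictMonoOn_of_deriv_pos (convex_Icc a u)
    · intro v hv
      have hv0 : 0 < v := lt_of_lt_of_le ha0 hv.1
      have hv1 : v < 1 := lt_of_le_of_lt hv.2 hu1
      exact (key v hv0 hv1).continuousAt.continuousWithinAt
    · intro v hv
      rw [interior_Icc] at hv
      have hv0 : 0 < v := lt_trans ha0 hv.1
      have hv1 : v < 1 := lt_trans hv.2 hu1
      rw [(key v hv0 hv1).deriv]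
      have hvt : v ^ t < 1 := Real.rpow_lt_one hv0.le hv1 (by linarith)
      have hvt1pos : (0:ℝ) < v ^ (t-1) := Real.rpow_pos_of_pos hv0 _
      have hvt2pos : (0:ℝ) < v ^ (t-2) := Real.rpow_pos_of_pos hv0 _
      -- relations
      have e1 : v ^ (t-1) = v ^ (t-2) * v := by
        rw [← Real.rpow_add_one hv0.ne' (t-2)]; congr 1; ring
      have e2 : v ^ t = v ^ (t-1) * v := by
        rw [← Real.rpow_add_one hv0.ne' (t-1)]; congr 1; ring
      have e3 : t - 1 - 1 = t - 2 := by ring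
      -- Q positivity from aux_sinh
      have hsinh := aux_sinh v (t-1) hv0 hv1 (by linarith)
      have es1 : 1 - (t-1) = 2 - t := by ring
      have es2 : 1 + (t-1) = t := by ring
      rw [es1, es2] at hsinh
      have hinv : v ^ (t-2) * v ^ (2-t) = 1 := by
        rw [← Real.rpow_add hv0]; norm_num
      have hQ : 0 < 1 - v ^ (t-2) * v ^ t - (t-1) * (v ^ (t-2) * (1 - v*v)) := by
        have := mul_lt_mul_of_pos_left hsinh hvt2pos
        have hexp : v ^ (t-2) * (v ^ (2-t) - v ^ t) = 1 - v ^ (t-2) * v ^ t := by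
          rw [mul_sub, hinv]
        nlinarith
      rw [e3]
      set w2 := v ^ (t-2) with hw2
      rw [e2, e1]
      have heq : v ^ t = w2 * v * v := by rw [e2, e1]
      have hvt' : w2 * v * v < 1 := heq ▸ hvt
      have hne1 : (1:ℝ) - w2 * v * v ≠ 0 := by nlinarith
      have hne2 : (1:ℝ) - v ≠ 0 := by nlinarith
      have hne3 : (1:ℝ) + w2 * v ≠ 0 := by nlinarith [mul_pos hvt2pos hv0]
      have hrw : (-(t * (w2 * v)))/(1 - w2 * v * v) - (-1/(1-v)) - ((t-1) * w2)/(1 + w2 * v)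
          = (1 - w2 * (w2 * v * v) - (t-1) * (w2 * (1 - v*v)))
            / ((1 - w2 * v * v) * ((1-v) * (1 + w2 * v))) := by
        rw [div_sub_div _ _ hne1 hne2, div_sub_div _ _ (mul_ne_zero hne1 hne2) hne3, div_eq_div_iff (mul_ne_zero (mul_ne_zero hne1 hne2) hne3) (mul_ne_zero hne1 (mul_ne_zero hne2 hne3))]
        ring
      rw [hrw]
      apply div_pos
      · have hq2 : v ^ (t-2) * v ^ t = w2 * (w2 * v * v) := by
          rw [heq]
        rw [hq2] at hQ
        linarith [hQ]
      · apply mul_pos (by linarith) (mul_pos (by linarith) (by nlinarith [mul_pos hvt2pos hv0]))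
  have hflt : f a < f u := hmono ⟨le_refl a, hau.le⟩ ⟨hau.le, le_refl u⟩ hau
  have hexpf : ∀ v, 0 < v → v < 1 →
      Real.exp (f v) = (1 - v ^ t) / ((1-v) * (1 + v ^ (t-1))) := by
    intro v hv0 hv1
    have hvt : v ^ t < 1 := Real.rpow_lt_one hv0.le hv1 (by linarith)
    have hvt1pos : (0:ℝ) < v ^ (t-1) := Real.rpow_pos_of_pos hv0 _
    rw [hf]
    simp only
    rw [Real.exp_sub, Real.exp_sub, Real.exp_log (by linarith : (0:ℝ) < 1 - v ^ t),
      Real.exp_log (by linarith : (0:ℝ) < 1 - v),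
      Real.exp_log (by linarith : (0:ℝ) < 1 + v ^ (t-1))]
    rw [div_div]
  have hlt := Real.exp_lt_exp.mpr hflt
  have hu0 : 0 < u := lt_trans ha0 hau
  have ha1 : a < 1 := lt_trans hau hu1
  rw [hexpf a ha0 ha1, hexpf u hu0 hu1] at hlt
  have hat : a ^ t < 1 := Real.rpow_lt_one ha0.le ha1 (by linarith)
  have hut : u ^ t < 1 := Real.rpow_lt_one hu0.le hu1 (by linarith)
  have hat1 : (0:ℝ) < a ^ (t-1) := Real.rpow_pos_of_pos ha0 _
  have hut1 : (0:ℝ) < u ^ (t-1) := Real.rpow_pos_of_pos hu0 _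
  have := (div_lt_div_iff₀ (by nlinarith) (by nlinarith)).mp hlt
  linear_combination this

set_option maxHeartbeats 1000000 in
theorem stmt_10 (p q r m x : ℝ) (hp : 1 < p) (hq : 1 < q) (hr : 1 < r)
    (hm : m ∈ Set.Ioo (0:ℝ) 1) (hx : x ∈ Set.Ioo (0:ℝ) 1) (hpq : q ≤ (2 * r - 1) * p)
    (R D : ℝ) (hR : R = (1 - m ^ q) / (1 + m ^ (r - 1)))
    (hD : D = (1 - (1 - m ^ (r - 1)) * x ^ (r - 1)) ^ (1 / (r - 1))) :
    1 - R - R * (m * x) ^ (r - 1) - (m * x) ^ q >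
      D ^ ((2 * r - 1) * p) *
        (1 - R + R * (m * x) ^ (r - 1) / D ^ (r - 1) - (m * x) ^ q / D ^ q) := by
  obtain ⟨hm0, hm1⟩ := hm
  obtain ⟨hx0, hx1⟩ := hx
  have hk : 0 < r - 1 := by linarith
  set k := r - 1 with hkdef
  set a := m ^ k with hadef
  set y := x ^ k with hydef
  have ha0 : 0 < a := Real.rpow_pos_of_pos hm0 _
  have ha1 : a < 1 := Real.rpow_lt_one hm0.le hm1 hk
  have hy0 : 0 < y := Real.rpow_pos_of_pos hx0 _
  have hy1 : y < 1 := Real.rpow_lt_one hx0.le hx1 hk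
  set u := 1 - (1 - a) * y with hudef
  have hau : a < u := by nlinarith
  have hu0 : 0 < u := by nlinarith
  have hu1 : u < 1 := by nlinarith
  set t := q / k with htdef
  set s := (2 * r - 1) * p / k with hsdef
  have ht0 : 0 < t := div_pos (by linarith) hk
  have hts : t ≤ s := by
    rw [htdef, hsdef, div_le_div_iff₀ hk hk]
    nlinarith
  have hs2 : 2 < s := by
    rw [hsdef, lt_div_iff₀ hk]
    nlinarith
  have hkt : k * t = q := by rw [htdef, mul_div_cancel₀ _ hk.ne']
  have hks : k * s = (2 * r - 1) * p := by rw [hsdef, mul_div_cancel₀ _ hk.ne']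
  -- power rewrites
  have hmq : a ^ t = m ^ q := by rw [hadef, ← Real.rpow_mul hm0.le, hkt]
  have hmxk : (m * x) ^ k = a * y := by rw [hadef, hydef, Real.mul_rpow hm0.le hx0.le]
  have hmxq : (m * x) ^ q = (a * y) ^ t := by
    rw [← hkt, Real.rpow_mul (by positivity : (0:ℝ) ≤ m * x), hmxk]
  have hDu : D = u ^ (1 / k) := hD
  have hDk : D ^ k = u := by
    rw [hDu, ← Real.rpow_mul hu0.le, one_div, inv_mul_cancel₀ hk.ne', Real.rpow_one]
  have hDq : D ^ q = u ^ t := by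
    rw [hDu, ← Real.rpow_mul hu0.le]
    congr 1
    rw [htdef]
    field_simp
  have hDE : D ^ ((2 * r - 1) * p) = u ^ s := by
    rw [hDu, ← Real.rpow_mul hu0.le]
    congr 1
    rw [hsdef]
    field_simp
  rw [← hmq] at hR
  rw [hmxk, hmxq, hDk, hDq, hDE]
  -- atoms
  set At := a ^ t with hAtdef
  set Yt := y ^ t with hYtdef
  set Pt := (a * y) ^ t with hPtdef
  set Ut := u ^ t with hUtdef
  set Ut1 := u ^ (t - 1) with hUt1def
  set U1 := u ^ s with hU1def
  set U2 := u ^ (s - 1) with hU2def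
  set U3 := u ^ (s - t) with hU3def
  have hPt : Pt = At * Yt := by
    rw [hPtdef, hAtdef, hYtdef, Real.mul_rpow ha0.le hy0.le]
  have hAt0 : 0 < At := Real.rpow_pos_of_pos ha0 _
  have hAt1 : At < 1 := Real.rpow_lt_one ha0.le ha1 ht0
  have hYt1 : Yt < 1 := Real.rpow_lt_one hy0.le hy1 ht0
  have hYt0 : 0 < Yt := Real.rpow_pos_of_pos hy0 _
  have hUt0 : 0 < Ut := Real.rpow_pos_of_pos hu0 _
  have hUt10 : 0 < Ut1 := Real.rpow_pos_of_pos hu0 _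
  have hU30 : 0 < U3 := Real.rpow_pos_of_pos hu0 _
  have hPt0 : 0 < Pt := by rw [hPt]; positivity
  have hU3t : U3 * Ut = U1 := by
    rw [hU3def, hUtdef, hU1def, ← Real.rpow_add hu0]
    congr 1; ring
  have hU3t1 : U3 * Ut1 = U2 := by
    rw [hU3def, hUt1def, hU2def, ← Real.rpow_add hu0]
    congr 1; ring
  have hUt1u : Ut1 * u = Ut := by
    rw [hUt1def, hUtdef, ← Real.rpow_add_one hu0.ne']
    congr 1; ring
  have hU1lt : U1 < u * u := by
    have h2 : u ^ s < u ^ (2:ℝ) := Real.rpow_lt_rpow_of_exponent_gt hu0 hu1 hs2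
    have : u ^ (2:ℝ) = u * u := by
      rw [show (2:ℝ) = ((2:ℕ):ℝ) by norm_num, Real.rpow_natCast]
      ring
    rw [hU1def]; rw [this] at h2; exact h2
  have hU3le : U3 ≤ 1 := Real.rpow_le_one hu0.le hu1.le (by linarith)
  clear_value At Yt Pt Ut Ut1 U1 U2 U3
  -- reduce goal
  rw [gt_iff_lt, ← sub_pos]
  have hane : (1:ℝ) + a ≠ 0 := by linarith
  have hgoal : (1 - R - R * (a * y) - Pt) - U1 * (1 - R + R * (a * y) / u - Pt / Ut)
      = ((a + At) * (1 - U1) - (1 - At) * (a * y) * (1 + U2) - (1 + a) * Pt * (1 - U3))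
        / (1 + a) := by
    rw [hR, ← hU3t, ← hU3t1, ← hUt1u]
    field_simp
    ring
  rw [hgoal]
  apply div_pos _ (by linarith)
  set CC := (a + At) - (1 - At) * (a * y) - (1 + a) * Pt with hCCdef
  set HH := (a + At) * Ut + (1 - At) * (a * y) * Ut1 - (1 + a) * Pt with hHHdef
  clear_value CC HH
  have hdecomp : (a + At) * (1 - U1) - (1 - At) * (a * y) * (1 + U2) - (1 + a) * Pt * (1 - U3)
      = CC - U3 * HH := by
    rw [hCCdef, hHHdef, ← hU3t, ← hU3t1]
    ring
  have hCC : 0 < CC := by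
    have : CC = (1 - At) * a * (1 - y) + (1 + a) * At * (1 - Yt) := by
      rw [hCCdef, hPt]; ring
    rw [this]
    have h1 : 0 < (1 - At) * a * (1 - y) := by
      apply mul_pos (mul_pos (by linarith) ha0) (by linarith)
    have h2 : 0 < (1 + a) * At * (1 - Yt) := by
      apply mul_pos (mul_pos (by linarith) hAt0) (by linarith)
    linarith
  rw [hdecomp]
  rcases le_or_gt HH 0 with hH | hH
  · have h1 : U3 * HH ≤ 0 := mul_nonpos_of_nonneg_of_nonpos hU30.le hH
    linarith
  · by_cases ht2 : t ≤ 2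
    · -- case t ≤ 2 : use aux_phi
      have hE1 : 0 ≤ CC * Ut - (u * u) * HH := by
        have hzero : 1 - (1 - a) * y - u = 0 := by rw [hudef]; ring
        rcases eq_or_lt_of_le ht2 with h2 | h2
        · -- t = 2
          have hAt2 : At = a * a := by
            rw [hAtdef, h2, show (2:ℝ) = ((2:ℕ):ℝ) by norm_num, Real.rpow_natCast]; ring
          have hUt2 : Ut = u * u := by
            rw [hUtdef, h2, show (2:ℝ) = ((2:ℕ):ℝ) by norm_num, Real.rpow_natCast]; ring
          have hUt12 : Ut1 = u := by
            rw [hUt1def, h2, show (2:ℝ) - 1 = 1 by norm_num, Real.rpow_one]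
          have : CC * Ut - (u * u) * HH = 0 := by
            rw [hCCdef, hHHdef, hAt2, hUt2, hUt12]
            linear_combination (u * u * (1 + u) * (1 + a) * a) * hzero
          linarith
        · -- t < 2
          set β := 2 - t with hβdef
          have hβ0 : 0 < β := by rw [hβdef]; linarith
          have hβ2 : β < 2 := by rw [hβdef]; linarith
          have haux := aux_phi β a u hβ0 hβ2 ha0 hau hu1
          set Ab := a ^ β with hAbdef
          set Ub := u ^ β with hUbdef
          set Da := (1 - a) ^ (β - 1) with hDadef
          set Du := (1 - u) ^ (β - 1) with hDudef
          have hDa0 : 0 < Da := Real.rpow_pos_of_pos (by linarith) _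
          have hDu0 : 0 < Du := Real.rpow_pos_of_pos (by linarith) _
          have hAb1 : Ab < 1 := Real.rpow_lt_one ha0.le ha1 hβ0
          have hUb1 : Ub < 1 := Real.rpow_lt_one hu0.le hu1 hβ0
          -- relation Du * Yt = Da * y
          have h1u : (1:ℝ) - u = (1 - a) * y := by rw [hudef]; ring
          have hrel : Du * Yt = Da * y := by
            rw [hDudef, h1u, Real.mul_rpow (by linarith : (0:ℝ) ≤ 1 - a) hy0.le, hDadef,
              hYtdef]
            rw [mul_assoc]
            congr 1
            rw [← Real.rpow_add hy0]
            rw [show β - 1 + t = 1 by rw [hβdef]; ring, Real.rpow_one]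
          -- derive (1+a)*Yt*(1-Ub) ≤ (1+u)*y*(1-Ab)
          have h1 : (1 + a) * Da * (1 - Ub) ≤ (1 + u) * Du * (1 - Ab) := le_of_lt haux
          have h2 := mul_le_mul_of_nonneg_right h1 hy0.le
          have h3 : Du * ((1 + a) * Yt * (1 - Ub)) ≤ Du * ((1 + u) * y * (1 - Ab)) := by
            calc Du * ((1 + a) * Yt * (1 - Ub)) = (1 + a) * (Du * Yt) * (1 - Ub) := by ring
            _ = (1 + a) * Da * (1 - Ub) * y := by rw [hrel]; ring
            _ ≤ (1 + u) * Du * (1 - Ab) * y := h2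
            _ = Du * ((1 + u) * y * (1 - Ab)) := by ring
          have h4 : (1 + a) * Yt * (1 - Ub) ≤ (1 + u) * y * (1 - Ab) :=
            le_of_mul_le_mul_left h3 hDu0
          -- relations At*Ab = a*a, Ut*Ub = u*u
          have hAtAb : At * Ab = a * a := by
            rw [hAtdef, hAbdef, ← Real.rpow_add ha0,
              show t + β = 2 by rw [hβdef]; ring,
              show (2:ℝ) = ((2:ℕ):ℝ) by norm_num, Real.rpow_natCast]
            ring
          have hUtUb : Ut * Ub = u * u := by
            rw [hUtdef, hUbdef, ← Real.rpow_add hu0,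
              show t + β = 2 by rw [hβdef]; ring,
              show (2:ℝ) = ((2:ℕ):ℝ) by norm_num, Real.rpow_natCast]
            ring
          -- identity : CC*Ut - u*u*HH = Ut*At*((1+u)*y*(1-Ab) - (1+a)*Yt*(1-Ub))
          have hid : CC * Ut - (u * u) * HH
              = Ut * At * ((1 + u) * y * (1 - Ab) - (1 + a) * Yt * (1 - Ub)) := by
            rw [hCCdef, hHHdef, hPt]
            linear_combination ((1 + u) * y * Ut) * hAtAb + (-(1 + a) * At * Yt) * hUtUb +
              (-(1 - At) * a * y * u) * hUt1u + (Ut * (1 + u) * (a + At)) * hzero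
          rw [hid]
          have := mul_nonneg (mul_pos hUt0 hAt0).le (sub_nonneg.mpr h4)
          linarith
      have hkey : 0 < CC * Ut - U1 * HH := by
        have hlt := mul_lt_mul_of_pos_right hU1lt hH
        linarith
      have : CC - U3 * HH = (CC * Ut - U1 * HH) / Ut := by
        rw [eq_div_iff hUt0.ne', ← hU3t]
        ring
      rw [this]
      exact div_pos hkey hUt0
    · -- case t > 2 : use aux_g
      push_neg at ht2
      have haux := aux_g t a u ht2 ha0 hau hu1
      rw [← hAtdef, ← hUtdef, ← hUt1def] at haux
      have hAt1' : a * a ^ (t - 1) = At := by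
        rw [hAtdef, mul_comm, ← Real.rpow_add_one ha0.ne' (t - 1)]
        congr 1
        ring
      have h1u : (1:ℝ) - u = (1 - a) * y := by rw [hudef]; ring
      have hCH : CC - HH = (a + At) * (1 - Ut) - (1 - At) * (a * y) * (1 + Ut1) := by
        rw [hCCdef, hHHdef]; ring
      have hmul : (CC - HH) * (1 - a)
          = a * ((1 - Ut) * (1 - a) * (1 + a ^ (t - 1)) - (1 - At) * (1 - u) * (1 + Ut1)) := by
        rw [hCH]
        linear_combination ((1 - Ut) * (1 - a)) * hAt1'.symm +
          (a * (1 - At) * (1 + Ut1)) * h1u.symm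
      have hE2 : 0 < CC - HH := by
        have hpos : 0 < (CC - HH) * (1 - a) := by
          rw [hmul]
          apply mul_pos ha0
          linarith [haux]
        rcases mul_pos_iff.mp hpos with ⟨h1, _⟩ | ⟨_, h2⟩
        · exact h1
        · linarith
      have hU3HH : U3 * HH ≤ HH := by
        have := mul_le_mul_of_nonneg_right hU3le hH.le
        linarith
      linarith
end

section
/- Let p > 1, q > 1, r > 1, m ∈ (0,1), x ∈ (0,1) with q ≤ (2r-1)p, R := (1-m^q)/(1+m^{r-1}), and D := (1 - (1-m^{r-1})x^{r-1})^{1/(r-1)}. Then m^{r-1}·x^{r-1}·(1 + D^{(2r-1)p-(r-1)})/(1 - D^{(2r-1)p}) < m^{r-1}·(1 + m^{(2r-1)p-(r-1)})/(1 - m^{(2r-1)p}). -/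
open Real

/-- `λ cosh(λx) sinh x > sinh(λx) cosh x` for `x > 0`, `λ > 1`. -/
lemma aux_N (lam : ℝ) (hlam : 1 < lam) {x : ℝ} (hx : 0 < x) :
    Real.sinh (lam * x) * Real.cosh x < lam * Real.cosh (lam * x) * Real.sinh x := by
  have hderiv : ∀ y : ℝ, HasDerivAt
      (fun y => lam * Real.cosh (lam * y) * Real.sinh y - Real.sinh (lam * y) * Real.cosh y)
      ((lam ^ 2 - 1) * (Real.sinh (lam * y) * Real.sinh y)) y := by
    intro y
    have hly : HasDerivAt (fun y : ℝ => lam * y) lam y := by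
      simpa using (hasDerivAt_id y).const_mul lam
    have hs : HasDerivAt (fun y => Real.sinh (lam * y)) (Real.cosh (lam * y) * lam) y :=
      (Real.hasDerivAt_sinh (lam * y)).comp y hly
    have hc : HasDerivAt (fun y => Real.cosh (lam * y)) (Real.sinh (lam * y) * lam) y :=
      (Real.hasDerivAt_cosh (lam * y)).comp y hly
    have h1 := ((hc.const_mul lam).mul (Real.hasDerivAt_sinh y)).sub
      (hs.mul (Real.hasDerivAt_cosh y))
    refine h1.congr_deriv ?_
    ring
  have hmono : StrictMonoOn
      (fun y => lam * Real.cosh (lam * y) * Real.sinh y - Real.sinh (lam * y) * Real.cosh y)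
      (Set.Ici 0) := by
    apply strictMonoOn_of_deriv_pos (convex_Ici 0)
    · exact Continuous.continuousOn (by fun_prop)
    · intro y hy
      rw [interior_Ici] at hy
      rw [(hderiv y).deriv]
      have h1 : 0 < lam ^ 2 - 1 := by nlinarith
      have h2 : 0 < Real.sinh (lam * y) := Real.sinh_pos_iff.2 (by nlinarith [hy.out])
      have h3 : 0 < Real.sinh y := Real.sinh_pos_iff.2 hy.out
      positivity
  have := hmono (Set.self_mem_Ici) (Set.mem_Ici.2 hx.le) hx
  simp only [mul_zero, Real.sinh_zero, Real.cosh_zero] at this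
  nlinarith [this]

/-- cross-multiplied monotonicity of `sinh(λx)/sinh x`. -/
lemma sinh_cross (lam : ℝ) (hlam : 1 < lam) {A B : ℝ} (hA : 0 < A) (hAB : A < B) :
    Real.sinh (lam * A) * Real.sinh B < Real.sinh A * Real.sinh (lam * B) := by
  have hmono : StrictMonoOn (fun y => Real.sinh (lam * y) / Real.sinh y) (Set.Ioi 0) := by
    apply strictMonoOn_of_deriv_pos (convex_Ioi 0)
    · apply ContinuousOn.div
      · exact Continuous.continuousOn (by fun_prop)
      · exact Real.continuous_sinh.continuousOn
      · intro y hy; exact (Real.sinh_pos_iff.2 hy).ne'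
    · intro y hy
      rw [interior_Ioi] at hy
      have hy0 : (0:ℝ) < y := hy
      have hly : HasDerivAt (fun y : ℝ => lam * y) lam y := by
        simpa using (hasDerivAt_id y).const_mul lam
      have hs : HasDerivAt (fun y => Real.sinh (lam * y)) (Real.cosh (lam * y) * lam) y :=
        (Real.hasDerivAt_sinh (lam * y)).comp y hly
      have hne : Real.sinh y ≠ 0 := (Real.sinh_pos_iff.2 hy0).ne'
      have hd := hs.div (Real.hasDerivAt_sinh y) hne
      rw [show deriv (fun y => Real.sinh (lam * y) / Real.sinh y) y = _ from hd.deriv]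
      have hN := aux_N lam hlam hy0
      have hsq : 0 < Real.sinh y ^ 2 := by positivity
      apply div_pos _ hsq
      nlinarith [hN]
  have := hmono (Set.mem_Ioi.2 hA) (Set.mem_Ioi.2 (hA.trans hAB)) hAB
  have hsA : 0 < Real.sinh A := Real.sinh_pos_iff.2 hA
  have hsB : 0 < Real.sinh B := Real.sinh_pos_iff.2 (hA.trans hAB)
  rw [div_lt_div_iff₀ hsA hsB] at this
  linarith [this]

lemma exp_sub_exp (x y : ℝ) :
    Real.exp x - Real.exp y = 2 * Real.exp ((x + y) / 2) * Real.sinh ((x - y) / 2) := by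
  have e1 := Real.exp_add ((x + y) / 2) ((x - y) / 2)
  have e2 := Real.exp_add ((x + y) / 2) (-((x - y) / 2))
  rw [show (x + y) / 2 + (x - y) / 2 = x by ring] at e1
  rw [show (x + y) / 2 + -((x - y) / 2) = y by ring] at e2
  rw [Real.sinh_eq, e1, e2]
  ring

/-- Key inequality: `(m^a - m^b)(1 - D^(a+b)) < (D^a - D^b)(1 - m^(a+b))`. -/
lemma key3 (a b m D : ℝ) (ha : 0 < a) (hab : a < b) (hm : 0 < m) (hmD : m < D)
    (hD : D < 1) :
    (m ^ a - m ^ b) * (1 - D ^ (a + b)) < (D ^ a - D ^ b) * (1 - m ^ (a + b)) := by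
  have hD0 : 0 < D := hm.trans hmD
  have hlogm : Real.log m < Real.log D := Real.log_lt_log hm hmD
  have hlogD : Real.log D < 0 := Real.log_neg hD0 hD
  set Lm : ℝ := -Real.log m with hLm
  set LD : ℝ := -Real.log D with hLD
  have hLD0 : 0 < LD := by simp [hLD]; linarith
  have hLmLD : LD < Lm := by simp [hLm, hLD]; linarith
  clear_value Lm LD
  have hrm : ∀ e : ℝ, m ^ e = Real.exp (Real.log m * e) := fun e => Real.rpow_def_of_pos hm e
  have hrD : ∀ e : ℝ, D ^ e = Real.exp (Real.log D * e) := fun e => Real.rpow_def_of_pos hD0 e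
  have e1 : m ^ a - m ^ b = 2 * Real.exp (-((a + b) * Lm) / 2) * Real.sinh ((b - a) * Lm / 2) := by
    rw [hrm a, hrm b, exp_sub_exp]
    have : Real.log m * a + Real.log m * b = -((a + b) * Lm) := by rw [hLm]; ring
    rw [this]
    congr 2
    rw [hLm]; ring
  have e2 : D ^ a - D ^ b = 2 * Real.exp (-((a + b) * LD) / 2) * Real.sinh ((b - a) * LD / 2) := by
    rw [hrD a, hrD b, exp_sub_exp]
    have : Real.log D * a + Real.log D * b = -((a + b) * LD) := by rw [hLD]; ring
    rw [this]
    congr 2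
    rw [hLD]; ring
  have e3 : 1 - D ^ (a + b) = 2 * Real.exp (-((a + b) * LD) / 2) * Real.sinh ((a + b) * LD / 2) := by
    nth_rewrite 1 [show (1:ℝ) = Real.exp 0 by simp]
    rw [hrD (a + b), exp_sub_exp]
    have : (0 + Real.log D * (a + b)) = -((a + b) * LD) := by rw [hLD]; ring
    rw [this]
    congr 2
    rw [hLD]; ring
  have e4 : 1 - m ^ (a + b) = 2 * Real.exp (-((a + b) * Lm) / 2) * Real.sinh ((a + b) * Lm / 2) := by
    nth_rewrite 1 [show (1:ℝ) = Real.exp 0 by simp]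
    rw [hrm (a + b), exp_sub_exp]
    have : (0 + Real.log m * (a + b)) = -((a + b) * Lm) := by rw [hLm]; ring
    rw [this]
    congr 2
    rw [hLm]; ring
  rw [e1, e2, e3, e4]
  have hE : 0 < Real.exp (-((a + b) * Lm) / 2) * Real.exp (-((a + b) * LD) / 2) := by positivity
  -- now reduce to sinh cross inequality
  set lam : ℝ := (a + b) / (b - a) with hlam_def
  have hba : 0 < b - a := by linarith
  have hlam : 1 < lam := by
    rw [hlam_def, lt_div_iff₀ hba]; linarith
  have hA : 0 < (b - a) * LD / 2 := by positivity
  have hAB : (b - a) * LD / 2 < (b - a) * Lm / 2 := by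
    have : (b - a) * LD < (b - a) * Lm := by nlinarith
    linarith
  have hcross := sinh_cross lam hlam hA hAB
  have hl1 : lam * ((b - a) * LD / 2) = (a + b) * LD / 2 := by
    rw [hlam_def]; field_simp
  have hl2 : lam * ((b - a) * Lm / 2) = (a + b) * Lm / 2 := by
    rw [hlam_def]; field_simp
  rw [hl1, hl2] at hcross
  nlinarith [hcross, hE, Real.exp_pos (-((a + b) * Lm) / 2), Real.exp_pos (-((a + b) * LD) / 2)]

theorem stmt_11 (p q r m x : ℝ) (hp : 1 < p) (hq : 1 < q) (hr : 1 < r)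
    (hm : m ∈ Set.Ioo (0:ℝ) 1) (hx : x ∈ Set.Ioo (0:ℝ) 1) (hpq : q ≤ (2 * r - 1) * p)
    (R D : ℝ) (hR : R = (1 - m ^ q) / (1 + m ^ (r - 1)))
    (hD : D = (1 - (1 - m ^ (r - 1)) * x ^ (r - 1)) ^ (1 / (r - 1))) :
    m ^ (r - 1) * x ^ (r - 1) * (1 + D ^ ((2 * r - 1) * p - (r - 1))) /
        (1 - D ^ ((2 * r - 1) * p)) <
      m ^ (r - 1) * (1 + m ^ ((2 * r - 1) * p - (r - 1))) / (1 - m ^ ((2 * r - 1) * p)) := by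
  obtain ⟨hm0, hm1⟩ := hm
  obtain ⟨hx0, hx1⟩ := hx
  set a : ℝ := r - 1 with ha_def
  set b : ℝ := (2 * r - 1) * p - (r - 1) with hb_def
  have ha : 0 < a := by rw [ha_def]; linarith
  have hab : a < b := by rw [ha_def, hb_def]; nlinarith
  have hs : (2 * r - 1) * p = a + b := by rw [ha_def, hb_def]; ring
  rw [hs]
  have hma0 : 0 < m ^ a := Real.rpow_pos_of_pos hm0 a
  have hma1 : m ^ a < 1 := Real.rpow_lt_one hm0.le hm1 ha
  have hxa0 : 0 < x ^ a := Real.rpow_pos_of_pos hx0 a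
  have hxa1 : x ^ a < 1 := Real.rpow_lt_one hx0.le hx1 ha
  have hbase1 : 1 - (1 - m ^ a) * x ^ a < 1 := by nlinarith
  have hbasem : m ^ a < 1 - (1 - m ^ a) * x ^ a := by nlinarith
  have hbase0 : 0 < 1 - (1 - m ^ a) * x ^ a := hma0.trans hbasem
  have hD0 : 0 < D := by
    rw [hD]; exact Real.rpow_pos_of_pos hbase0 _
  have hD1 : D < 1 := by
    rw [hD]; exact Real.rpow_lt_one hbase0.le hbase1 (by positivity)
  have hDa : D ^ a = 1 - (1 - m ^ a) * x ^ a := by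
    rw [hD, ← Real.rpow_mul hbase0.le, one_div, inv_mul_cancel₀ ha.ne', Real.rpow_one]
  have hmD : m < D := by
    by_contra h
    push_neg at h
    have := Real.rpow_le_rpow hD0.le h ha.le
    rw [hDa] at this
    linarith
  have key := key3 a b m D ha hab hm0 hmD hD1
  have hden1 : 0 < 1 - D ^ (a + b) := by
    have := Real.rpow_lt_one hD0.le hD1 (by linarith : (0:ℝ) < a + b)
    linarith
  have hden2 : 0 < 1 - m ^ (a + b) := by
    have := Real.rpow_lt_one hm0.le hm1 (by linarith : (0:ℝ) < a + b)
    linarith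
  rw [div_lt_div_iff₀ hden1 hden2]
  rw [Real.rpow_add hm0, Real.rpow_add hD0] at key ⊢
  have hxa_eq : x ^ a * (1 - m ^ a) = 1 - D ^ a := by rw [hDa]; ring
  have expand : m ^ a * (1 - m ^ a) * (1 + m ^ b) * (1 - D ^ a * D ^ b)
      - m ^ a * (1 - D ^ a) * (1 + D ^ b) * (1 - m ^ a * m ^ b)
      = m ^ a * ((D ^ a - D ^ b) * (1 - m ^ a * m ^ b)
        - (m ^ a - m ^ b) * (1 - D ^ a * D ^ b)) := by ring
  have hpos2 : 0 < m ^ a * ((D ^ a - D ^ b) * (1 - m ^ a * m ^ b)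
      - (m ^ a - m ^ b) * (1 - D ^ a * D ^ b)) := mul_pos hma0 (by linarith)
  have H : m ^ a * (1 - D ^ a) * (1 + D ^ b) * (1 - m ^ a * m ^ b)
      < m ^ a * (1 - m ^ a) * (1 + m ^ b) * (1 - D ^ a * D ^ b) := by linarith
  have e1 : m ^ a * (1 - D ^ a) * (1 + D ^ b) * (1 - m ^ a * m ^ b)
      = m ^ a * x ^ a * (1 + D ^ b) * (1 - m ^ a * m ^ b) * (1 - m ^ a) := by
    rw [← hxa_eq]; ring
  have e2 : m ^ a * (1 - m ^ a) * (1 + m ^ b) * (1 - D ^ a * D ^ b)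
      = m ^ a * (1 + m ^ b) * (1 - D ^ a * D ^ b) * (1 - m ^ a) := by ring
  rw [e1, e2] at H
  exact (mul_lt_mul_iff_of_pos_right (by linarith : (0:ℝ) < 1 - m ^ a)).mp H
end

section
/- Let p > 1, q > 1, r > 1, m ∈ (0,1), x ∈ (0,1) with q ≤ (2r-1)p, and let D := (1 - (1-m^{r-1})x^{r-1})^{1/(r-1)}. Then m^q·x^q·(1 - D^{(2r-1)p-q})/(1 - D^{(2r-1)p}) ≤ m^q·(1 - m^{(2r-1)p-q})/(1 - m^{(2r-1)p}). -/
private lemma bern {s β : ℝ} (hs : 0 < s) (hs1 : s < 1) (hβ : 1 ≤ β) :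
    β * s ^ (β - 1) * (1 - s) ≤ 1 - s ^ β := by
  have hy : (-1:ℝ) ≤ 1 / s - 1 := by
    have : 0 < 1 / s := by positivity
    linarith
  have h := one_add_mul_self_le_rpow_one_add hy hβ
  rw [show (1:ℝ) + (1 / s - 1) = s⁻¹ by ring, Real.inv_rpow hs.le] at h
  have hsb : 0 < s ^ β := Real.rpow_pos_of_pos hs β
  have h2 : s ^ β * (1 + β * (1 / s - 1)) ≤ 1 := by
    calc s ^ β * (1 + β * (1 / s - 1)) ≤ s ^ β * (s ^ β)⁻¹ :=
          mul_le_mul_of_nonneg_left h hsb.le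
      _ = 1 := mul_inv_cancel₀ hsb.ne'
  have hdiv : s ^ β / s = s ^ (β - 1) := by
    rw [Real.rpow_sub hs, Real.rpow_one]
  have hexp : s ^ β * (1 + β * (1 / s - 1)) = s ^ β + β * (s ^ β / s) * (1 - s) := by
    field_simp
  rw [hexp, hdiv] at h2
  linarith

private lemma key {a b t : ℝ} (ha : 0 < a) (hab : a ≤ b) (ht : 0 < t) (ht1 : t < 1) :
    b * t ^ (b - 1) * (1 - t ^ a) ≤ a * t ^ (a - 1) * (1 - t ^ b) := by
  have hs : 0 < t ^ a := Real.rpow_pos_of_pos ht a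
  have hs1 : t ^ a < 1 := Real.rpow_lt_one ht.le ht1 ha
  have hβ : 1 ≤ b / a := (one_le_div ha).2 hab
  have h := bern hs hs1 hβ
  have h1 : (t ^ a) ^ (b / a) = t ^ b := by
    rw [← Real.rpow_mul ht.le, mul_div_cancel₀ b ha.ne']
  have h2 : (t ^ a) ^ (b / a - 1) = t ^ (b - a) := by
    rw [← Real.rpow_mul ht.le]
    congr 1
    field_simp
  rw [h1, h2] at h
  -- h : b / a * t ^ (b - a) * (1 - t ^ a) ≤ 1 - t ^ b
  have hta : 0 < t ^ (a - 1) := Real.rpow_pos_of_pos ht (a - 1)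
  have h3 := mul_le_mul_of_nonneg_left h (by positivity : (0:ℝ) ≤ a * t ^ (a - 1))
  calc b * t ^ (b - 1) * (1 - t ^ a)
      = a * t ^ (a - 1) * (b / a * t ^ (b - a) * (1 - t ^ a)) := by
        rw [show a * t ^ (a - 1) * (b / a * t ^ (b - a) * (1 - t ^ a))
            = (a * (b / a)) * (t ^ (a - 1) * t ^ (b - a)) * (1 - t ^ a) by ring,
          mul_div_cancel₀ b ha.ne', ← Real.rpow_add ht,
          show a - 1 + (b - a) = b - 1 by ring]
    _ ≤ a * t ^ (a - 1) * (1 - t ^ b) := h3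

private lemma ratio_mono {a b : ℝ} (ha : 0 < a) (hab : a ≤ b) {u v : ℝ} (hu : 0 < u)
    (huv : u ≤ v) (hv : v < 1) :
    (1 - u ^ b) / (1 - u ^ a) ≤ (1 - v ^ b) / (1 - v ^ a) := by
  set F : ℝ → ℝ := fun t => (1 - t ^ b) / (1 - t ^ a) with hF
  have hderiv : ∀ t ∈ Set.Icc u v, HasDerivAt F
      ((-(b * t ^ (b - 1)) * (1 - t ^ a) - (1 - t ^ b) * (-(a * t ^ (a - 1)))) /
        (1 - t ^ a) ^ 2) t := by
    intro t ht
    have ht0 : 0 < t := lt_of_lt_of_le hu ht.1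
    have ht1 : t < 1 := lt_of_le_of_lt ht.2 hv
    have hne : 1 - t ^ a ≠ 0 := by
      have : t ^ a < 1 := Real.rpow_lt_one ht0.le ht1 ha
      linarith
    have h1 : HasDerivAt (fun t : ℝ => 1 - t ^ b) (-(b * t ^ (b - 1))) t :=
      (Real.hasDerivAt_rpow_const (Or.inl ht0.ne')).const_sub 1
    have h2 : HasDerivAt (fun t : ℝ => 1 - t ^ a) (-(a * t ^ (a - 1))) t :=
      (Real.hasDerivAt_rpow_const (Or.inl ht0.ne')).const_sub 1
    exact h1.div h2 hne
  have hmono : MonotoneOn F (Set.Icc u v) := by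
    apply monotoneOn_of_hasDerivWithinAt_nonneg (convex_Icc u v)
      (fun t ht => ((hderiv t ht).continuousAt).continuousWithinAt)
      (fun t ht => ((hderiv t (interior_subset ht)).hasDerivWithinAt))
    intro t ht
    rw [interior_Icc] at ht
    have ht0 : 0 < t := lt_trans hu ht.1
    have ht1 : t < 1 := lt_trans ht.2 hv
    have hk := key ha hab ht0 ht1
    have hnum : 0 ≤ -(b * t ^ (b - 1)) * (1 - t ^ a) - (1 - t ^ b) * (-(a * t ^ (a - 1))) := by
      nlinarith [hk]
    positivity
  exact hmono (Set.left_mem_Icc.2 huv) (Set.right_mem_Icc.2 huv) huv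

theorem stmt_12 (p q r m x : ℝ) (hp : 1 < p) (hq : 1 < q) (hr : 1 < r)
    (hm : m ∈ Set.Ioo (0:ℝ) 1) (hx : x ∈ Set.Ioo (0:ℝ) 1) (hpq : q ≤ (2 * r - 1) * p)
    (D : ℝ) (hD : D = (1 - (1 - m ^ (r - 1)) * x ^ (r - 1)) ^ (1 / (r - 1))) :
    m ^ q * x ^ q * (1 - D ^ ((2 * r - 1) * p - q)) / (1 - D ^ ((2 * r - 1) * p)) ≤
      m ^ q * (1 - m ^ ((2 * r - 1) * p - q)) / (1 - m ^ ((2 * r - 1) * p)) := by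
  obtain ⟨hm0, hm1⟩ := hm
  obtain ⟨hx0, hx1⟩ := hx
  have hr1 : 0 < r - 1 := by linarith
  -- bounds on D
  set I : ℝ := 1 - (1 - m ^ (r - 1)) * x ^ (r - 1) with hI
  have hmr0 : 0 < m ^ (r - 1) := Real.rpow_pos_of_pos hm0 _
  have hmr1 : m ^ (r - 1) < 1 := Real.rpow_lt_one hm0.le hm1 hr1
  have hxr0 : 0 < x ^ (r - 1) := Real.rpow_pos_of_pos hx0 _
  have hxr1 : x ^ (r - 1) < 1 := Real.rpow_lt_one hx0.le hx1 hr1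
  have hIm : m ^ (r - 1) < I := by
    have : (1 - m ^ (r - 1)) * x ^ (r - 1) < (1 - m ^ (r - 1)) * 1 := by
      apply mul_lt_mul_of_pos_left hxr1; linarith
    simp only [hI]; linarith
  have hI1 : I < 1 := by
    have : 0 < (1 - m ^ (r - 1)) * x ^ (r - 1) := by
      apply mul_pos; linarith; exact hxr0
    simp only [hI]; linarith
  have hI0 : 0 < I := lt_trans hmr0 hIm
  have hD1 : D < 1 := by
    rw [hD]; exact Real.rpow_lt_one hI0.le hI1 (by positivity)
  have hmD : m < D := by
    have h1 : (m ^ (r - 1)) ^ (1 / (r - 1)) < I ^ (1 / (r - 1)) :=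
      Real.rpow_lt_rpow hmr0.le hIm (by positivity)
    rwa [← Real.rpow_mul hm0.le, mul_one_div, div_self hr1.ne', Real.rpow_one, ← hD] at h1
  have hD0 : 0 < D := lt_trans hm0 hmD
  set B : ℝ := (2 * r - 1) * p with hB
  have hB1 : 1 < B := by nlinarith
  rcases eq_or_lt_of_le hpq with heq | hlt
  · rw [show B - q = 0 by rw [← heq]; ring, Real.rpow_zero, Real.rpow_zero]
    simp
  · have hA : 0 < B - q := by linarith
    have hmB : m ^ B < 1 := Real.rpow_lt_one hm0.le hm1 (by linarith)
    have hmA : m ^ (B - q) < 1 := Real.rpow_lt_one hm0.le hm1 hA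
    have hDB : D ^ B < 1 := Real.rpow_lt_one hD0.le hD1 (by linarith)
    have hDA : D ^ (B - q) < 1 := Real.rpow_lt_one hD0.le hD1 hA
    have hmB0 : 0 < m ^ B := Real.rpow_pos_of_pos hm0 _
    have hmA0 : 0 < m ^ (B - q) := Real.rpow_pos_of_pos hm0 _
    have hDB0 : 0 < D ^ B := Real.rpow_pos_of_pos hD0 _
    have hDA0 : 0 < D ^ (B - q) := Real.rpow_pos_of_pos hD0 _
    have hrm := ratio_mono hA (by linarith : B - q ≤ B) hm0 hmD.le hD1
    -- hrm : (1 - m^B)/(1 - m^(B-q)) ≤ (1 - D^B)/(1 - D^(B-q))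
    have hcross : (1 - D ^ (B - q)) * (1 - m ^ B) ≤ (1 - m ^ (B - q)) * (1 - D ^ B) := by
      rw [div_le_div_iff₀ (by linarith) (by linarith)] at hrm
      linear_combination hrm
    have hxq1 : x ^ q ≤ 1 := (Real.rpow_le_one hx0.le hx1.le (by linarith))
    have hxq0 : 0 < x ^ q := Real.rpow_pos_of_pos hx0 _
    have hmq0 : 0 < m ^ q := Real.rpow_pos_of_pos hm0 _
    have step1 : m ^ q * x ^ q * (1 - D ^ (B - q)) / (1 - D ^ B)
        ≤ m ^ q * (1 - D ^ (B - q)) / (1 - D ^ B) := by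
      have hP : 0 ≤ m ^ q * (1 - D ^ (B - q)) / (1 - D ^ B) := by
        apply div_nonneg _ (by linarith)
        nlinarith
      calc m ^ q * x ^ q * (1 - D ^ (B - q)) / (1 - D ^ B)
          = x ^ q * (m ^ q * (1 - D ^ (B - q)) / (1 - D ^ B)) := by ring
        _ ≤ 1 * (m ^ q * (1 - D ^ (B - q)) / (1 - D ^ B)) :=
            mul_le_mul_of_nonneg_right hxq1 hP
        _ = m ^ q * (1 - D ^ (B - q)) / (1 - D ^ B) := one_mul _
    have step2 : m ^ q * (1 - D ^ (B - q)) / (1 - D ^ B)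
        ≤ m ^ q * (1 - m ^ (B - q)) / (1 - m ^ B) := by
      rw [mul_div_assoc, mul_div_assoc]
      apply mul_le_mul_of_nonneg_left ?_ hmq0.le
      rw [div_le_div_iff₀ (by linarith) (by linarith)]
      linarith [hcross]
    exact step1.trans step2
end

section
/- Let p > 1, q > 1 with 1/p + 1/p* = 1, and let u : [-T,T] → ℝ satisfy u'(x) = (1 - |u(x)|^q)^{1/p} for all x ∈ [-T,T], with u'(-T) = u'(T) = 0 and u'(x) > 0 on (-T,T). Then for every real s ≥ 0, ∫_{-T}^{T} |u(x)|^{2s} dx = ((2s+1)p* + q)/((2s+1)p*) · ∫_{-T}^{T} |u(x)|^{q+2s} dx. -/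
open Set intervalIntegral Filter

/-- derivative of `t ↦ |t|^r * t` -/
lemma aux_hasDerivAt_abs_rpow_mul_self {r : ℝ} (hr : 0 ≤ r) (y : ℝ) :
    HasDerivAt (fun t : ℝ => |t| ^ r * t) ((r + 1) * |y| ^ r) y := by
  rcases eq_or_ne y 0 with rfl | hy
  · rcases eq_or_lt_of_le hr with rfl | hr'
    · simp only [Real.rpow_zero, one_mul]
      simpa using hasDerivAt_id' (0 : ℝ)
    · rw [hasDerivAt_iff_tendsto_slope]
      have habs0 : |(0:ℝ)| ^ r = 0 := by
        simp [Real.zero_rpow hr'.ne']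
      have hval : (r + 1) * |(0:ℝ)| ^ r = 0 := by rw [habs0, mul_zero]
      rw [hval]
      have hcont : Tendsto (fun t : ℝ => |t| ^ r) (nhds 0) (nhds 0) := by
        have : ContinuousAt (fun t : ℝ => |t| ^ r) 0 :=
          (Real.continuousAt_rpow_const _ r (Or.inr hr)).comp continuous_abs.continuousAt
        simpa [Real.zero_rpow hr'.ne'] using this.tendsto
      refine Tendsto.congr' ?_ (hcont.mono_left nhdsWithin_le_nhds)
      filter_upwards [self_mem_nhdsWithin] with t (ht : t ≠ 0)
      simp only [slope_def_field, div_eq_iff (sub_ne_zero.2 ht)]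
      field_simp
      simp
  · have h1 : HasDerivAt (fun t : ℝ => |t| ^ r) (r * |y| ^ (r - 1) * (SignType.sign y : ℝ)) y :=
      (Real.hasDerivAt_rpow_const (Or.inl (abs_ne_zero.2 hy))).comp y (hasDerivAt_abs hy)
    have h2 := h1.mul (hasDerivAt_id y)
    refine h2.congr_deriv (Eq.symm ?_)
    have key : |y| ^ (r - 1) * |y| = |y| ^ r := by
      rw [← Real.rpow_add_one (abs_ne_zero.2 hy), sub_add_cancel]
    rcases hy.lt_or_gt with hneg | hpos
    · rw [sign_neg hneg]
      have habs : |y| = -y := abs_of_neg hneg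
      rw [habs] at key ⊢
      simp only [id_eq, SignType.coe_neg, SignType.coe_one]
      linear_combination (-r) * key
    · rw [sign_pos hpos]
      have habs : |y| = y := abs_of_pos hpos
      rw [habs] at key ⊢
      simp only [id_eq, SignType.coe_one]
      linear_combination (-r) * key

/-- endpoint lemma: forcing `v e = 0` -/
lemma aux_endpoint {p : ℝ} (hp : 1 < p) (v : ℝ → ℝ) (e : ℝ)
    (hcont : ContinuousAt v e) (hz : (v e) ^ (1 / p) = 0)
    (l : Filter ℝ) [l.NeBot] (hl : l ≤ nhds e)
    (hposl : ∀ᶠ x in l, 0 < v x ^ (1 / p)) : v e = 0 := by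
  by_contra h
  rcases lt_or_gt_of_ne h with hneg | hposv
  · have hcos : Real.cos (1 / p * Real.pi) = 0 := by
      rw [Real.rpow_def_of_neg hneg] at hz
      rcases mul_eq_zero.1 hz with h' | h'
      · exact absurd h' (Real.exp_ne_zero _)
      · exact h'
    have hev : ∀ᶠ x in l, v x < 0 :=
      (hl (hcont (Iio_mem_nhds hneg)) : _)
    rcases (hposl.and hev).exists with ⟨x, hx1, hx2⟩
    rw [Real.rpow_def_of_neg hx2, hcos, mul_zero] at hx1
    exact lt_irrefl _ hx1
  · exact absurd hz (ne_of_gt (Real.rpow_pos_of_pos hposv _))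

/-- `a ≥ 0`, `a ^ q = 1`, `0 < q` imply `a = 1` -/
lemma aux_rpow_eq_one {a q : ℝ} (ha : 0 ≤ a) (hq : 0 < q) (h : a ^ q = 1) : a = 1 := by
  rcases lt_trichotomy a 1 with h1 | h1 | h1
  · exact absurd h (ne_of_lt (Real.rpow_lt_one ha h1 hq))
  · exact h1
  · have := (Real.one_lt_rpow_iff_of_pos (lt_trans zero_lt_one h1)).2 (Or.inl ⟨h1, hq⟩)
    rw [h] at this; exact absurd this (lt_irrefl 1)

/-- outer derivative lemma -/
lemma aux_outer {q pstar s : ℝ} (hq : 1 < q) (hs : 0 ≤ s) {y : ℝ}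
    (hb : 0 < 1 - |y| ^ q) :
    HasDerivAt (fun t : ℝ => |t| ^ (2 * s) * t * (1 - |t| ^ q) ^ (1 / pstar))
      ((2 * s + 1) * |y| ^ (2 * s) * (1 - |y| ^ q) ^ (1 / pstar) -
        (q / pstar) * |y| ^ (q + 2 * s) * (1 - |y| ^ q) ^ (1 / pstar - 1)) y := by
  have h1 : HasDerivAt (fun t : ℝ => |t| ^ (2 * s) * t) ((2 * s + 1) * |y| ^ (2 * s)) y := by
    have := aux_hasDerivAt_abs_rpow_mul_self (r := 2 * s) (by linarith) y
    convert this using 2 <;> try ring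
  have habs : HasDerivAt (fun t : ℝ => |t| ^ q) (q * |y| ^ (q - 2) * y) y :=
    hasDerivAt_abs_rpow y hq
  have hin : HasDerivAt (fun t : ℝ => 1 - |t| ^ q) (-(q * |y| ^ (q - 2) * y)) y :=
    habs.const_sub 1
  have h2 : HasDerivAt (fun t : ℝ => (1 - |t| ^ q) ^ (1 / pstar))
      (1 / pstar * (1 - |y| ^ q) ^ (1 / pstar - 1) * -(q * |y| ^ (q - 2) * y)) y :=
    by have := (Real.hasDerivAt_rpow_const (x := 1 - |y| ^ q) (p := 1 / pstar) (Or.inl hb.ne')).comp y hin; exact this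
  have h3 := h1.mul h2
  refine h3.congr_deriv (Eq.symm ?_)
  rcases eq_or_ne y 0 with rfl | hy
  · have h0 : |(0:ℝ)| ^ (q + 2 * s) = 0 := by
      simp [Real.zero_rpow (by positivity : q + 2 * s ≠ 0)]
    rw [h0]; try ring
  · have hy' : (0:ℝ) < |y| := abs_pos.2 hy
    have e1 : |y| ^ (q + 2 * s) = |y| ^ (2 * s) * |y| ^ (q - 2) * (y * y) := by
      rw [show q + 2 * s = 2 * s + (q - 2) + 2 by ring, Real.rpow_add hy',
        Real.rpow_add hy']
      have : |y| ^ ((2:ℕ):ℝ) = |y| ^ (2:ℕ) := Real.rpow_natCast _ 2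
      push_cast at this
      rw [this, sq_abs, sq]
      try ring
    rw [e1]; try ring

theorem stmt_13 (p q T : ℝ) (hp : 1 < p) (hq : 1 < q) (hT : 0 < T)
    (pstar : ℝ) (hps : 1 / p + 1 / pstar = 1)
    (u : ℝ → ℝ)
    (hder : ∀ x ∈ Icc (-T) T, HasDerivAt u ((1 - |u x| ^ q) ^ (1 / p)) x)
    (hbcl : deriv u (-T) = 0) (hbcr : deriv u T = 0)
    (hpos : ∀ x ∈ Ioo (-T) T, 0 < deriv u x)
    (s : ℝ) (hs : 0 ≤ s) :
    ∫ x in (-T)..T, |u x| ^ (2 * s) =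
      ((2 * s + 1) * pstar + q) / ((2 * s + 1) * pstar) *
        ∫ x in (-T)..T, |u x| ^ (q + 2 * s) := by
  have hp0 : 0 < p := by linarith
  have h1p : 0 < 1 / p := by positivity
  have h1p' : 1 / p < 1 := by
    rw [div_lt_one hp0]; exact hp
  have hips : 1 / pstar = 1 - 1 / p := by linarith
  have hips0 : 0 < 1 / pstar := by rw [hips]; linarith
  have hpstar : 0 < pstar := by
    rcases lt_trichotomy pstar 0 with h | h | h
    · exact absurd hips0 (not_lt.2 (le_of_lt (div_neg_of_pos_of_neg one_pos h)))
    · rw [h] at hips0; simp at hips0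
    · exact h
  have hTT : -T ≤ T := by linarith
  have hTT' : -T < T := by linarith
  have hq0 : (0:ℝ) < q := by linarith
  -- continuity of u
  have hucont : ContinuousOn u (Icc (-T) T) := fun x hx =>
    ((hder x hx).continuousAt).continuousWithinAt
  -- strict monotonicity
  have hmono : StrictMonoOn u (Icc (-T) T) := by
    apply strictMonoOn_of_deriv_pos (convex_Icc _ _) hucont
    intro x hx
    rw [interior_Icc] at hx
    exact hpos x hx
  -- continuity of b ∘ u
  have hbV : Continuous fun t : ℝ => 1 - |t| ^ q :=
    continuous_const.sub ((Real.continuous_rpow_const hq0.le).comp continuous_abs)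
  -- endpoints of b ∘ u vanish
  have hIoo_pos : ∀ x ∈ Ioo (-T) T, 0 < (1 - |u x| ^ q) ^ (1 / p) := by
    intro x hx
    have := hpos x hx
    rwa [(hder x (Ioo_subset_Icc_self hx)).deriv] at this
  have hbl : 1 - |u (-T)| ^ q = 0 := by
    apply aux_endpoint hp (fun x => 1 - |u x| ^ q) (-T)
      (hbV.continuousAt.comp (hder (-T) (by constructor <;> linarith)).continuousAt)
      (by rw [← (hder (-T) (by constructor <;> linarith)).deriv]; exact hbcl)
      (nhdsWithin (-T) (Ioi (-T))) nhdsWithin_le_nhds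
    filter_upwards [Ioo_mem_nhdsGT_of_mem (⟨le_refl _, hTT'⟩ : -T ∈ Ico (-T) T)] with x hx
    exact hIoo_pos x hx
  have hbr : 1 - |u T| ^ q = 0 := by
    apply aux_endpoint hp (fun x => 1 - |u x| ^ q) T
      (hbV.continuousAt.comp (hder T (by constructor <;> linarith)).continuousAt)
      (by rw [← (hder T (by constructor <;> linarith)).deriv]; exact hbcr)
      (nhdsWithin T (Iio T)) nhdsWithin_le_nhds
    filter_upwards [Ioo_mem_nhdsLT_of_mem (⟨hTT', le_refl _⟩ : T ∈ Ioc (-T) T)] with x hx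
    exact hIoo_pos x hx
  have habsl : |u (-T)| = 1 := aux_rpow_eq_one (abs_nonneg _) hq0 (by linarith)
  have habsr : |u T| = 1 := aux_rpow_eq_one (abs_nonneg _) hq0 (by linarith)
  have hlt : u (-T) < u T :=
    hmono (by constructor <;> linarith) (by constructor <;> linarith) hTT'
  have huL : u (-T) = -1 := by
    rcases abs_eq (by norm_num : (0:ℝ) ≤ 1) |>.1 habsl with h1 | h1
    · exfalso
      rcases abs_eq (by norm_num : (0:ℝ) ≤ 1) |>.1 habsr with h2 | h2 <;> rw [h1, h2] at hlt <;>
        linarith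
    · exact h1
  have huR : u T = 1 := by
    rcases abs_eq (by norm_num : (0:ℝ) ≤ 1) |>.1 habsr with h2 | h2
    · exact h2
    · exfalso; rw [huL, h2] at hlt; linarith
  -- interior bound
  have hinner : ∀ x ∈ Ioo (-T) T, 0 < 1 - |u x| ^ q := by
    intro x hx
    have h1 : u (-T) < u x :=
      hmono (by constructor <;> linarith) (Ioo_subset_Icc_self hx) hx.1
    have h2 : u x < u T :=
      hmono (Ioo_subset_Icc_self hx) (by constructor <;> linarith) hx.2
    rw [huL] at h1; rw [huR] at h2
    have : |u x| < 1 := abs_lt.2 ⟨h1, h2⟩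
    have := Real.rpow_lt_one (abs_nonneg _) this hq0
    linarith
  -- the functions
  set G : ℝ → ℝ := fun x => |u x| ^ (2 * s) * u x * (1 - |u x| ^ q) ^ (1 / pstar) with hG
  set E : ℝ → ℝ := fun x =>
    (2 * s + 1) * |u x| ^ (2 * s) - (2 * s + 1 + q / pstar) * |u x| ^ (q + 2 * s) with hE
  -- derivative of G
  have hGderiv : ∀ x ∈ Ioo (-T) T, HasDerivAt G (E x) x := by
    intro x hx
    have hbx := hinner x hx
    have hcomp := (aux_outer (pstar := pstar) hq hs hbx).comp x (hder x (Ioo_subset_Icc_self hx))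
    have hGc : HasDerivAt G
        (((2 * s + 1) * |u x| ^ (2 * s) * (1 - |u x| ^ q) ^ (1 / pstar) -
          q / pstar * |u x| ^ (q + 2 * s) * (1 - |u x| ^ q) ^ (1 / pstar - 1)) *
          (1 - |u x| ^ q) ^ (1 / p)) x := hcomp
    convert hGc using 1
    have e1 : (1 - |u x| ^ q) ^ (1 / pstar) * (1 - |u x| ^ q) ^ (1 / p) = 1 - |u x| ^ q := by
      rw [← Real.rpow_add hbx, show 1 / pstar + 1 / p = 1 by linarith, Real.rpow_one]
    have e2 : (1 - |u x| ^ q) ^ (1 / pstar - 1) * (1 - |u x| ^ q) ^ (1 / p) = 1 := by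
      rw [← Real.rpow_add hbx, show 1 / pstar - 1 + 1 / p = 0 by linarith, Real.rpow_zero]
    have e3 : |u x| ^ (q + 2 * s) = |u x| ^ q * |u x| ^ (2 * s) :=
      Real.rpow_add' (abs_nonneg _) (by positivity)
    simp only [hE]
    linear_combination (-(2 * s + 1) * |u x| ^ (2 * s)) * e1 +
      (q / pstar * |u x| ^ (q + 2 * s)) * e2 + (-(2 * s + 1)) * e3
  -- continuity of G on Icc
  have houter : Continuous fun t : ℝ => |t| ^ (2 * s) * t * (1 - |t| ^ q) ^ (1 / pstar) := by
    apply Continuous.mul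
    · exact (((Real.continuous_rpow_const (by linarith)).comp continuous_abs)).mul continuous_id
    · exact (continuous_const.sub
        ((Real.continuous_rpow_const hq0.le).comp continuous_abs)).rpow_const
        (fun x => Or.inr hips0.le)
  have hGcont : ContinuousOn G (Icc (-T) T) := houter.comp_continuousOn hucont
  -- integrability
  have hAc : ContinuousOn (fun x => |u x| ^ (2 * s)) (Icc (-T) T) :=
    ((Real.continuous_rpow_const (by linarith)).comp continuous_abs).comp_continuousOn hucont
  have hBc : ContinuousOn (fun x => |u x| ^ (q + 2 * s)) (Icc (-T) T) :=
    ((Real.continuous_rpow_const (by positivity)).comp continuous_abs).comp_continuousOn hucont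
  have hAint : IntervalIntegrable (fun x => |u x| ^ (2 * s)) MeasureTheory.volume (-T) T := by
    apply ContinuousOn.intervalIntegrable; rwa [uIcc_of_le hTT]
  have hBint : IntervalIntegrable (fun x => |u x| ^ (q + 2 * s)) MeasureTheory.volume (-T) T := by
    apply ContinuousOn.intervalIntegrable; rwa [uIcc_of_le hTT]
  have hEint : IntervalIntegrable E MeasureTheory.volume (-T) T :=
    (hAint.const_mul (2 * s + 1)).sub (hBint.const_mul (2 * s + 1 + q / pstar))
  -- FTC
  have hFTC : ∫ x in (-T)..T, E x = G T - G (-T) :=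
    integral_eq_sub_of_hasDerivAt_of_le hTT hGcont hGderiv hEint
  have hGT : G T = 0 := by
    simp only [hG, huR]
    norm_num [Real.one_rpow, Real.zero_rpow hips0.ne', Real.zero_rpow (inv_ne_zero hpstar.ne')]
  have hGmT : G (-T) = 0 := by
    simp only [hG, huL]
    norm_num [Real.one_rpow, Real.zero_rpow hips0.ne', Real.zero_rpow (inv_ne_zero hpstar.ne')]
  have hzero : (2 * s + 1) * (∫ x in (-T)..T, |u x| ^ (2 * s)) -
      (2 * s + 1 + q / pstar) * (∫ x in (-T)..T, |u x| ^ (q + 2 * s)) = 0 := by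
    have : ∫ x in (-T)..T, E x =
        (2 * s + 1) * (∫ x in (-T)..T, |u x| ^ (2 * s)) -
        (2 * s + 1 + q / pstar) * (∫ x in (-T)..T, |u x| ^ (q + 2 * s)) := by
      rw [hE]
      rw [intervalIntegral.integral_sub (hAint.const_mul _) (hBint.const_mul _),
        intervalIntegral.integral_const_mul, intervalIntegral.integral_const_mul]
    rw [this] at hFTC
    rw [hFTC, hGT, hGmT]; ring
  set IA := ∫ x in (-T)..T, |u x| ^ (2 * s)
  set IB := ∫ x in (-T)..T, |u x| ^ (q + 2 * s)
  have h2s1 : (0:ℝ) < 2 * s + 1 := by linarith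
  rw [div_mul_eq_mul_div, eq_div_iff (by positivity : (2 * s + 1) * pstar ≠ 0)]
  field_simp at hzero
  linear_combination hzero
end

section
/- Let p > 1, q > 1, and let u : [-T,T] → ℝ satisfy u'(x) = (1 - |u(x)|^q)^{1/p} for all x ∈ [-T,T], with u'(-T) = u'(T) = 0 and u'(x) > 0 on (-T,T). Then for every real s ≥ 0, ∫_{-T}^{T} |u(x)|^{2s} dx = ((2s+1)p* + q)/q · ∫_{-T}^{T} |u'(x)|^p · |u(x)|^{2s} dx, where p* = p/(p-1). -/
open Set intervalIntegral

open Real Filter Topology MeasureTheory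

private lemma cont_rpow (r : ℝ) (hr : 0 ≤ r) : Continuous fun t : ℝ => t ^ r :=
  continuous_iff_continuousAt.2 fun x => Real.continuousAt_rpow_const x r (Or.inr hr)

private lemma abs_rpow_two_mul (t r : ℝ) : |t| ^ (2 * r) = (t ^ 2) ^ r := by
  rw [Real.rpow_mul (abs_nonneg t), show ((2:ℝ) = ((2:ℕ):ℝ)) by norm_num,
    Real.rpow_natCast, sq_abs]

private lemma sq_rpow_hasDerivAt (r : ℝ) (hr : 1 < 2 * r) (t₀ : ℝ) :
    HasDerivAt (fun t : ℝ => (t ^ 2) ^ r) (2 * r * t₀ * (t₀ ^ 2) ^ (r - 1)) t₀ := by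
  by_cases ht₀ : t₀ = 0
  · subst ht₀
    have hval : 2 * r * 0 * ((0:ℝ) ^ 2) ^ (r - 1) = 0 := by ring
    rw [hval, hasDerivAt_iff_tendsto_slope]
    have hb : Tendsto (fun t : ℝ => |t| ^ (2 * r - 1)) (𝓝[≠] 0) (𝓝 0) := by
      have hc : ContinuousAt (fun t : ℝ => |t| ^ (2 * r - 1)) 0 :=
        ((cont_rpow (2 * r - 1) (by linarith)).comp continuous_abs).continuousAt
      have h2 : Tendsto (fun t : ℝ => |t| ^ (2 * r - 1)) (𝓝[≠] 0) (𝓝 (|(0:ℝ)| ^ (2 * r - 1))) :=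
        hc.tendsto.mono_left nhdsWithin_le_nhds
      simpa [Real.zero_rpow (show 2 * r - 1 ≠ 0 by linarith)] using h2
    apply squeeze_zero_norm' _ hb
    filter_upwards [self_mem_nhdsWithin] with t (ht : t ≠ 0)
    have h1 : slope (fun t : ℝ => (t ^ 2) ^ r) 0 t = (t ^ 2) ^ r / t := by
      simp [slope_def_field, Real.zero_rpow (show r ≠ 0 by nlinarith), ne_eq, ht]
    have h2 : (t ^ 2) ^ r = |t| ^ (2 * r) := (abs_rpow_two_mul t r).symm
    have h3 : |t| ^ (2 * r - 1) = |t| ^ (2 * r) / |t| := by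
      rw [Real.rpow_sub (abs_pos.2 ht), Real.rpow_one]
    rw [Real.norm_eq_abs, h1, abs_div, h2, abs_of_nonneg (Real.rpow_nonneg (abs_nonneg t) _), h3]
  · have h1 : HasDerivAt (fun t : ℝ => t ^ 2) (2 * t₀) t₀ := by
      simpa using hasDerivAt_pow 2 t₀
    have h2 := h1.rpow_const (p := r) (Or.inl (pow_ne_zero 2 ht₀))
    convert h2 using 1
    ring

private lemma mul_sq_rpow_hasDerivAt (s : ℝ) (hs : 0 ≤ s) (t₀ : ℝ) :
    HasDerivAt (fun t : ℝ => t * (t ^ 2) ^ s) ((2 * s + 1) * (t₀ ^ 2) ^ s) t₀ := by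
  rcases hs.eq_or_lt with hs0 | hs0
  · simp only [← hs0, Real.rpow_zero, mul_one]
    simpa using hasDerivAt_id' t₀
  by_cases ht₀ : t₀ = 0
  · subst ht₀
    have hval : (2 * s + 1) * ((0:ℝ) ^ 2) ^ s = 0 := by
      simp [Real.zero_rpow (ne_of_gt hs0)]
    rw [hval, hasDerivAt_iff_tendsto_slope]
    have hb : Tendsto (fun t : ℝ => (t ^ 2) ^ s) (𝓝[≠] 0) (𝓝 0) := by
      have hc : ContinuousAt (fun t : ℝ => (t ^ 2) ^ s) 0 :=
        ((cont_rpow s hs).comp (continuous_pow 2)).continuousAt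
      have h2 : Tendsto (fun t : ℝ => (t ^ 2) ^ s) (𝓝[≠] 0) (𝓝 (((0:ℝ) ^ 2) ^ s)) :=
        hc.tendsto.mono_left nhdsWithin_le_nhds
      simpa [Real.zero_rpow (ne_of_gt hs0)] using h2
    apply hb.congr'
    filter_upwards [self_mem_nhdsWithin] with t (ht : t ≠ 0)
    simp [slope_def_field, Real.zero_rpow (ne_of_gt hs0), ne_eq, ht]
  · have h1 : HasDerivAt (fun t : ℝ => t ^ 2) (2 * t₀) t₀ := by
      simpa using hasDerivAt_pow 2 t₀
    have h2 := h1.rpow_const (p := s) (Or.inl (pow_ne_zero 2 ht₀))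
    have h3 := (hasDerivAt_id' t₀).mul h2
    refine h3.congr_deriv ?_
    symm
    have ht2 : (0:ℝ) < t₀ ^ 2 := by positivity
    have key : (t₀ ^ 2) ^ s = t₀ ^ 2 * (t₀ ^ 2) ^ (s - 1) := by
      nth_rewrite 1 [show s = 1 + (s - 1) by ring]
      rw [Real.rpow_add ht2, Real.rpow_one]
    linear_combination 2 * s * key

theorem stmt_14 (p q T : ℝ) (hp : 1 < p) (hq : 1 < q) (hT : 0 < T)
    (u : ℝ → ℝ)
    (hder : ∀ x ∈ Icc (-T) T, HasDerivAt u ((1 - |u x| ^ q) ^ (1 / p)) x)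
    (hbcl : deriv u (-T) = 0) (hbcr : deriv u T = 0)
    (hpos : ∀ x ∈ Ioo (-T) T, 0 < deriv u x)
    (s : ℝ) (hs : 0 ≤ s) :
    ∫ x in (-T)..T, |u x| ^ (2 * s) =
      ((2 * s + 1) * (p / (p - 1)) + q) / q *
        ∫ x in (-T)..T, |deriv u x| ^ p * |u x| ^ (2 * s) := by
  have hppos : (0:ℝ) < p := by linarith
  have hqpos : (0:ℝ) < q := by linarith
  have hcpos : (0:ℝ) < 1 - 1/p := by
    have : 1/p < 1 := by rw [div_lt_one hppos]; linarith
    linarith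
  have hmem : ∀ x ∈ Ioo (-T) T, x ∈ Icc (-T) T := fun x hx => Ioo_subset_Icc_self hx
  have hTmem : T ∈ Icc (-T) T := ⟨by linarith, le_refl T⟩
  have hLmem : (-T) ∈ Icc (-T) T := ⟨le_refl _, by linarith⟩
  have hu_cont : ContinuousOn u (Icc (-T) T) :=
    fun x hx => (hder x hx).continuousAt.continuousWithinAt
  have hde : ∀ x ∈ Icc (-T) T, deriv u x = (1 - |u x| ^ q) ^ (1 / p) :=
    fun x hx => (hder x hx).deriv
  have hmono : StrictMonoOn u (Icc (-T) T) :=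
    strictMonoOn_of_deriv_pos (convex_Icc _ _) hu_cont (by rw [interior_Icc]; exact hpos)
  -- boundary values
  have haux : ∀ x₀ ∈ Icc (-T) T, deriv u x₀ = 0 → |u x₀| = 1 := by
    intro x₀ hx₀ h0
    have hb0 : (1 - |u x₀| ^ q) ^ (1/p) = 0 := by rw [← hde x₀ hx₀]; exact h0
    rcases lt_trichotomy (1 - |u x₀| ^ q) 0 with hb | hb | hb
    · exfalso
      rw [Real.rpow_def_of_neg hb] at hb0
      have hcos : Real.cos (1/p * π) = 0 := by
        rcases mul_eq_zero.1 hb0 with h | h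
        · exact absurd h (Real.exp_ne_zero _)
        · exact h
      obtain ⟨n, hn⟩ := Real.cos_eq_zero_iff.1 hcos
      have hp2 : p = 2 := by
        have hπ : (0:ℝ) < π := Real.pi_pos
        have h1 : 1/p = (2 * (n:ℝ) + 1) / 2 := by
          have := mul_right_cancel₀ (ne_of_gt hπ) (by linarith [hn] : 1/p * π = ((2 * (n:ℝ) + 1)/2) * π)
          exact this
        have h2 : 0 < 1/p := by positivity
        have h3 : 1/p < 1 := by rw [div_lt_one hppos]; linarith
        rw [h1] at h2 h3
        have h4 : (-1:ℝ) < (n:ℝ) := by linarith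
        have h5 : (n:ℝ) < 1 := by linarith
        have hn0 : n = 0 := by
          have h4' : (-1:ℤ) < n := by exact_mod_cast h4
          have h5' : n < 1 := by exact_mod_cast h5
          omega
        rw [hn0] at h1
        push_cast at h1
        field_simp at h1
        linarith
      -- find interior point with negative base
      have hgc : ContinuousAt (fun x => 1 - |u x| ^ q) x₀ := by
        have h1 : Continuous fun t : ℝ => (1:ℝ) - t ^ q :=
          continuous_const.sub (cont_rpow q hqpos.le)
        exact (h1.continuousAt).comp ((continuous_abs.continuousAt).comp
          (hder x₀ hx₀).continuousAt)
      have hev : ∀ᶠ x in 𝓝 x₀, 1 - |u x| ^ q < 0 := hgc.tendsto.eventually_lt_const hb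
      have hne : (𝓝[Ioo (-T) T] x₀).NeBot := by
        refine mem_closure_iff_nhdsWithin_neBot.1 ?_
        rw [closure_Ioo (show (-T) ≠ T by intro h; linarith)]
        exact hx₀
      have hev' : ∀ᶠ x in 𝓝[Ioo (-T) T] x₀, 1 - |u x| ^ q < 0 :=
        hev.filter_mono nhdsWithin_le_nhds
      obtain ⟨y, hy1, hy2⟩ := (hev'.and self_mem_nhdsWithin).exists
      have hdy : deriv u y = 0 := by
        rw [hde y (hmem y hy2), Real.rpow_def_of_neg hy1, hp2]
        rw [show (1:ℝ)/2 * π = π/2 by ring, Real.cos_pi_div_two, mul_zero]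
      exact absurd hdy (ne_of_gt (hpos y hy2))
    · -- 1 - |u x₀|^q = 0
      have h1 : |u x₀| ^ q = 1 := by linarith
      rcases lt_trichotomy |u x₀| 1 with h | h | h
      · exact absurd h1 (ne_of_lt (Real.rpow_lt_one (abs_nonneg _) h hqpos))
      · exact h
      · exfalso
        have := (Real.one_lt_rpow_iff_of_pos (by linarith : (0:ℝ) < |u x₀|)).2
          (Or.inl ⟨h, hqpos⟩)
        linarith
    · exact absurd hb0 (ne_of_gt (Real.rpow_pos_of_pos hb _))
  have hL : |u (-T)| = 1 := haux _ hLmem hbcl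
  have hR : |u T| = 1 := haux _ hTmem hbcr
  have hlt : u (-T) < u T := hmono hLmem hTmem (by linarith)
  have huL : u (-T) = -1 := by
    rcases (abs_eq (by norm_num : (0:ℝ) ≤ 1)).1 hL with h | h
    · exfalso
      have : u T ≤ 1 := le_trans (le_abs_self _) (le_of_eq hR)
      linarith
    · exact h
  have huR : u T = 1 := by
    rcases (abs_eq (by norm_num : (0:ℝ) ≤ 1)).1 hR with h | h
    · exact h
    · exfalso
      have h2 := neg_abs_le (u (-T))
      rw [hL] at h2
      linarith
  have habslt : ∀ x ∈ Ioo (-T) T, |u x| < 1 := by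
    intro x hx
    have h1 : u (-T) < u x := hmono hLmem (hmem x hx) hx.1
    have h2 : u x < u T := hmono (hmem x hx) hTmem hx.2
    rw [huL] at h1; rw [huR] at h2
    exact abs_lt.2 ⟨h1, h2⟩
  have hbpos : ∀ x ∈ Ioo (-T) T, 0 < 1 - |u x| ^ q := by
    intro x hx
    have := Real.rpow_lt_one (abs_nonneg _) (habslt x hx) hqpos
    linarith
  have hsq : ∀ t : ℝ, (t ^ 2) ^ (q/2) = |t| ^ q := by
    intro t
    rw [← abs_rpow_two_mul t (q/2)]
    congr 1
    ring
  -- definitions of F and G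
  set F : ℝ → ℝ := fun x => u x * (u x ^ 2) ^ s * (1 - (u x ^ 2) ^ (q/2)) ^ (1 - 1/p) with hF
  set G : ℝ → ℝ := fun x => (2*s+1) * (u x ^ 2) ^ s * (1 - (u x ^ 2) ^ (q/2)) -
      (1 - 1/p) * q * (u x ^ 2) ^ (s + q/2) with hG
  have hFderiv : ∀ x ∈ Ioo (-T) T, HasDerivAt F (G x) x := by
    intro x hx
    have hux := hder x (hmem x hx)
    have hb : 0 < 1 - |u x| ^ q := hbpos x hx
    have hb' : 0 < 1 - (u x ^ 2) ^ (q/2) := by rw [hsq]; exact hb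
    have h1 : HasDerivAt (fun y => u y * (u y ^ 2) ^ s)
        ((2*s+1) * (u x ^ 2) ^ s * ((1 - |u x| ^ q) ^ (1/p))) x := by
      have := (mul_sq_rpow_hasDerivAt s hs (u x)).comp x hux
      exact this
    have h2 : HasDerivAt (fun y => (u y ^ 2) ^ (q/2))
        (2 * (q/2) * u x * (u x ^ 2) ^ (q/2 - 1) * ((1 - |u x| ^ q) ^ (1/p))) x := by
      have := (sq_rpow_hasDerivAt (q/2) (by linarith) (u x)).comp x hux
      exact this
    have h3 := (hasDerivAt_const x (1:ℝ)).sub h2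
    have h4 := h3.rpow_const (p := 1 - 1/p) (Or.inl (ne_of_gt hb'))
    have h5 := h1.mul h4
    refine h5.congr_deriv ?_
    symm
    set b := 1 - |u x| ^ q with hbdef
    have e1 : b ^ (1/p) * b ^ (1 - 1/p) = b := by
      rw [← Real.rpow_add hb]
      norm_num
    have e2 : b ^ (1/p) * b ^ (1 - 1/p - 1) = 1 := by
      rw [← Real.rpow_add hb]
      norm_num
    have e3 : (u x ^ 2) * (u x ^ 2) ^ (q/2 - 1) = (u x ^ 2) ^ (q/2) := by
      rcases eq_or_ne (u x) 0 with h | h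
      · simp [h, Real.zero_rpow (show q/2 ≠ 0 by positivity), zero_pow]
      · nth_rewrite 1 [← Real.rpow_one (u x ^ 2)]
        rw [← Real.rpow_add (by positivity)]
        norm_num
    have e4 : (u x ^ 2) ^ s * (u x ^ 2) ^ (q/2) = (u x ^ 2) ^ (s + q/2) :=
      (Real.rpow_add' (sq_nonneg _) (by positivity)).symm
    have hbb : 1 - (u x ^ 2) ^ (q/2) = b := by rw [hsq, ← hbdef]
    simp only [hG, Pi.sub_apply, hbb]
    linear_combination (-(2*s+1)*(u x ^ 2) ^ s) * e1 +
      ((1-1/p)*q*(u x)^2*(u x ^ 2)^(q/2-1)*(u x ^ 2)^s) * e2 +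
      ((1-1/p)*q*(u x ^ 2)^s) * e3 + ((1-1/p)*q) * e4
  -- continuity
  have hgF : Continuous fun t : ℝ => t * (t^2)^s * (1 - (t^2)^(q/2))^(1-1/p) := by
    refine (continuous_id.mul ((cont_rpow s hs).comp (continuous_pow 2))).mul ?_
    exact (cont_rpow (1-1/p) hcpos.le).comp
      (continuous_const.sub ((cont_rpow (q/2) (by positivity)).comp (continuous_pow 2)))
  have hgG : Continuous fun t : ℝ =>
      (2*s+1) * (t^2)^s * (1 - (t^2)^(q/2)) - (1-1/p)*q*(t^2)^(s+q/2) := by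
    refine Continuous.sub ?_ ?_
    · exact (continuous_const.mul ((cont_rpow s hs).comp (continuous_pow 2))).mul
        (continuous_const.sub ((cont_rpow (q/2) (by positivity)).comp (continuous_pow 2)))
    · exact continuous_const.mul ((cont_rpow (s+q/2) (by positivity)).comp (continuous_pow 2))
  have hFcont : ContinuousOn F (Icc (-T) T) := hgF.comp_continuousOn hu_cont
  have hGcont : ContinuousOn G (Icc (-T) T) := hgG.comp_continuousOn hu_cont
  have huIcc : uIcc (-T) T = Icc (-T) T := uIcc_of_le (by linarith)
  have hGint : IntervalIntegrable G volume (-T) T := by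
    apply ContinuousOn.intervalIntegrable
    rw [huIcc]; exact hGcont
  have hint1 : IntervalIntegrable (fun x => (u x ^ 2) ^ s) volume (-T) T := by
    apply ContinuousOn.intervalIntegrable
    rw [huIcc]
    exact ((cont_rpow s hs).comp (continuous_pow 2)).comp_continuousOn hu_cont
  have hintB : IntervalIntegrable (fun x => (u x ^ 2) ^ s * (1 - (u x ^ 2) ^ (q/2)))
      volume (-T) T := by
    apply ContinuousOn.intervalIntegrable
    rw [huIcc]
    exact (((cont_rpow s hs).comp (continuous_pow 2)).mul
      (continuous_const.sub ((cont_rpow (q/2) (by positivity)).comp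
        (continuous_pow 2)))).comp_continuousOn hu_cont
  have hintD : IntervalIntegrable (fun x => (u x ^ 2) ^ (s + q/2)) volume (-T) T := by
    apply ContinuousOn.intervalIntegrable
    rw [huIcc]
    exact ((cont_rpow (s+q/2) (by positivity)).comp (continuous_pow 2)).comp_continuousOn hu_cont
  -- FTC
  have hFTC : ∫ x in (-T)..T, G x = F T - F (-T) :=
    integral_eq_sub_of_hasDerivAt_of_le (by linarith) hFcont hFderiv hGint
  have hsqT : u T ^ 2 = 1 := by rw [← sq_abs, hR]; norm_num
  have hsqL : u (-T) ^ 2 = 1 := by rw [← sq_abs, hL]; norm_num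
  have hFT : F T = 0 := by
    simp only [hF, hsqT, Real.one_rpow, sub_self, Real.zero_rpow (ne_of_gt hcpos), mul_zero]
  have hFL : F (-T) = 0 := by
    simp only [hF, hsqL, Real.one_rpow, sub_self, Real.zero_rpow (ne_of_gt hcpos), mul_zero]
  have hGzero : ∫ x in (-T)..T, G x = 0 := by rw [hFTC, hFT, hFL, sub_zero]
  -- split the integral of G
  have hGfun : (fun x => G x) = fun x =>
      (2*s+1) * ((u x ^ 2) ^ s * (1 - (u x ^ 2) ^ (q/2))) -
        ((1-1/p)*q) * (u x ^ 2) ^ (s + q/2) := by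
    funext x
    simp only [hG]
    ring
  have hsplit : ∫ x in (-T)..T, G x =
      (2*s+1) * (∫ x in (-T)..T, (u x ^ 2) ^ s * (1 - (u x ^ 2) ^ (q/2))) -
        ((1-1/p)*q) * ∫ x in (-T)..T, (u x ^ 2) ^ (s + q/2) := by
    rw [hGfun, integral_sub (hintB.const_mul _) (hintD.const_mul _),
      intervalIntegral.integral_const_mul, intervalIntegral.integral_const_mul]
  have hDfun : (fun x => (u x ^ 2) ^ (s + q/2)) = fun x =>
      (u x ^ 2) ^ s - (u x ^ 2) ^ s * (1 - (u x ^ 2) ^ (q/2)) := by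
    funext x
    rw [Real.rpow_add' (sq_nonneg _) (by positivity)]
    ring
  have hD : ∫ x in (-T)..T, (u x ^ 2) ^ (s + q/2) =
      (∫ x in (-T)..T, (u x ^ 2) ^ s) -
        ∫ x in (-T)..T, (u x ^ 2) ^ s * (1 - (u x ^ 2) ^ (q/2)) := by
    rw [hDfun, integral_sub hint1 hintB]
  -- rewrite the two integrals in the statement
  have hI1 : ∫ x in (-T)..T, |u x| ^ (2*s) = ∫ x in (-T)..T, (u x ^ 2) ^ s := by
    simp only [abs_rpow_two_mul]
  have hI2 : ∫ x in (-T)..T, |deriv u x| ^ p * |u x| ^ (2*s) =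
      ∫ x in (-T)..T, (u x ^ 2) ^ s * (1 - (u x ^ 2) ^ (q/2)) := by
    apply integral_congr
    rw [huIcc]
    intro x hx
    have hder_eq : |deriv u x| ^ p = 1 - |u x| ^ q := by
      rcases eq_or_lt_of_le hx.1 with h | h
      · rw [← h, hbcl]
        simp [Real.zero_rpow (ne_of_gt hppos), hL, Real.one_rpow]
      · rcases eq_or_lt_of_le hx.2 with h2 | h2
        · rw [h2, hbcr]
          simp [Real.zero_rpow (ne_of_gt hppos), hR, Real.one_rpow]
        · have hb := hbpos x ⟨h, h2⟩
          rw [hde x hx, abs_of_pos (Real.rpow_pos_of_pos hb _),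
            ← Real.rpow_mul (le_of_lt hb), one_div, inv_mul_cancel₀ (ne_of_gt hppos),
            Real.rpow_one]
    simp only
    rw [hder_eq, hsq, abs_rpow_two_mul]
    ring
  -- final algebra
  set A := ∫ x in (-T)..T, (u x ^ 2) ^ s with hA
  set B := ∫ x in (-T)..T, (u x ^ 2) ^ s * (1 - (u x ^ 2) ^ (q/2)) with hB
  rw [hI1, hI2]
  have hzero : (2*s+1) * B - ((1-1/p)*q) * (A - B) = 0 := by
    rw [← hD]
    rw [← hsplit]
    exact hGzero
  have hp1 : p - 1 ≠ 0 := by intro h; nlinarith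
  have hq0 : q ≠ 0 := ne_of_gt hqpos
  have hp0 : p ≠ 0 := ne_of_gt hppos
  field_simp
  field_simp at hzero
  linarith [hzero]
end
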